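/- arXiv:1311.6047 — 13 statements merged into one kernel-verified Lean document; each statement's English description precedes it below -/
import Mathlib

section
/- Let ν be a discrete valuation dominating a local domain (R, m_R), and for n ∈ ℕ let I_n = {f ∈ R : ν(f) ≥ n}. If dim_{R/m_R}(I_n/I_{n+1}) = r and k is the value ν(g) of some nonzero g ∈ R, then dim_{R/m_R}(I_{n+k}/I_{n+k+1}) ≥ r. -/
/- STATEMENT 0: Let ν be a discrete valuation dominating a local domain (R, m_R), and for
n ∈ ℕ let I_n = {f ∈ R : ν(f) ≥ n}. If dim_{R/m_R}(I_n/I_{n+1}) = r and k is the value ν(g)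
of some nonzero g ∈ R, then dim_{R/m_R}(I_{n+k}/I_{n+k+1}) ≥ r. -/
theorem stmt0 {R : Type} [CommRing R] [IsDomain R] [IsLocalRing R]
    (v : FractionRing R → ℤ)
    -- v is a valuation of the quotient field K = FractionRing R
    (hv_mul : ∀ x y : FractionRing R, x ≠ 0 → y ≠ 0 → v (x * y) = v x + v y)
    (hv_add : ∀ x y : FractionRing R, x ≠ 0 → y ≠ 0 → x + y ≠ 0 →
      min (v x) (v y) ≤ v (x + y))
    -- the value group is ℤ (ν is discrete)
    (hv_surj : ∀ m : ℤ, ∃ x : FractionRing R, x ≠ 0 ∧ v x = m)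
    -- ν dominates (R, m_R): V_ν ⊇ R and m_ν ∩ R = m_R
    (hdom : ∀ f : R, f ≠ 0 → 0 ≤ v (algebraMap R (FractionRing R) f))
    (hmax : ∀ f : R, f ≠ 0 →
      (f ∈ IsLocalRing.maximalIdeal R ↔ 0 < v (algebraMap R (FractionRing R) f)))
    -- the valuation ideals I_n = {f ∈ R : ν(f) ≥ n}
    (I : ℕ → Ideal R)
    (hI : ∀ (n : ℕ) (f : R), f ∈ I n ↔ f = 0 ∨ (n : ℤ) ≤ v (algebraMap R (FractionRing R) f))
    -- the residue field R/m_R acts on the quotients I_n/I_{n+1}, compatibly with R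
    [instMod : ∀ n : ℕ, Module (R ⧸ IsLocalRing.maximalIdeal R)
      (↥(I n) ⧸ (Submodule.comap (I n).subtype (I (n + 1))))]
    [∀ n : ℕ, IsScalarTower R (R ⧸ IsLocalRing.maximalIdeal R)
      (↥(I n) ⧸ (Submodule.comap (I n).subtype (I (n + 1))))]
    (n : ℕ) (r : ℕ)
    (hdim : Module.rank (R ⧸ IsLocalRing.maximalIdeal R)
      (↥(I n) ⧸ (Submodule.comap (I n).subtype (I (n + 1)))) = r)
    (k : ℕ) (g : R) (hg : g ≠ 0) (hk : v (algebraMap R (FractionRing R) g) = (k : ℤ)) :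
    (r : Cardinal) ≤ Module.rank (R ⧸ IsLocalRing.maximalIdeal R)
      (↥(I (n + k)) ⧸ (Submodule.comap (I (n + k)).subtype (I (n + k + 1)))) := by
  classical
  set A := algebraMap R (FractionRing R) with hA
  have hAinj : Function.Injective A := IsFractionRing.injective R (FractionRing R)
  have hAne : ∀ x : R, x ≠ 0 → A x ≠ 0 := fun x hx => by
    simpa using fun h => hx (hAinj (by simpa using h))
  -- value of a product g * x
  have hval : ∀ x : R, x ≠ 0 → v (A (g * x)) = (k : ℤ) + v (A x) := by
    intro x hx
    rw [map_mul, hv_mul _ _ (hAne g hg) (hAne x hx), hk]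
  -- g * x lands in I (n + k) when x ∈ I n
  have hmem : ∀ x : R, x ∈ I n → g * x ∈ I (n + k) := by
    intro x hx
    by_cases hx0 : x = 0
    · exact (hI _ _).2 (Or.inl (by simp [hx0]))
    · rcases (hI n x).1 hx with h0 | hle
      · exact absurd h0 hx0
      · refine (hI _ _).2 (Or.inr ?_)
        rw [hval x hx0]
        push_cast
        omega
  -- g * x lands in I (n + k + 1) when x ∈ I (n+1)
  have hmem1 : ∀ x : R, x ∈ I (n + 1) → g * x ∈ I (n + k + 1) := by
    intro x hx
    by_cases hx0 : x = 0
    · exact (hI _ _).2 (Or.inl (by simp [hx0]))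
    · rcases (hI _ x).1 hx with h0 | hle
      · exact absurd h0 hx0
      · refine (hI _ _).2 (Or.inr ?_)
        rw [hval x hx0]
        push_cast at hle ⊢
        omega
  -- conversely
  have hmem1' : ∀ x : R, x ∈ I n → g * x ∈ I (n + k + 1) → x ∈ I (n + 1) := by
    intro x _ hx
    by_cases hx0 : x = 0
    · exact (hI _ _).2 (Or.inl hx0)
    · rcases (hI _ _).1 hx with h0 | hle
      · exact absurd h0 (mul_ne_zero hg hx0)
      · rw [hval x hx0] at hle
        refine (hI _ _).2 (Or.inr ?_)
        push_cast at hle ⊢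
        omega
  -- the R-linear multiplication-by-g map
  let L : ↥(I n) →ₗ[R] ↥(I (n + k)) :=
    { toFun := fun x => ⟨g * x, hmem x x.2⟩
      map_add' := fun x y => by ext; simp [mul_add]
      map_smul' := fun c x => by ext; simp [mul_comm, mul_assoc, mul_left_comm] }
  let ψ : ↥(I n) →ₗ[R]
      (↥(I (n + k)) ⧸ (Submodule.comap (I (n + k)).subtype (I (n + k + 1)))) :=
    (Submodule.comap (I (n + k)).subtype (I (n + k + 1))).mkQ ∘ₗ L
  have hker : ∀ x : ↥(I n), ψ x = 0 ↔ (x : R) ∈ I (n + 1) := by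
    intro x
    constructor
    · intro h
      have : L x ∈ Submodule.comap (I (n + k)).subtype (I (n + k + 1)) := by
        simpa [ψ, Submodule.Quotient.mk_eq_zero] using h
      exact hmem1' x x.2 this
    · intro h
      have : L x ∈ Submodule.comap (I (n + k)).subtype (I (n + k + 1)) := hmem1 x h
      simpa [ψ, Submodule.Quotient.mk_eq_zero] using this
  have hle : Submodule.comap (I n).subtype (I (n + 1)) ≤ LinearMap.ker ψ := by
    intro x hx
    exact (hker x).2 hx
  let ψ' := Submodule.liftQ _ ψ hle
  have hψ'inj : Function.Injective ψ' := by
    rw [← LinearMap.ker_eq_bot, Submodule.ker_liftQ_eq_bot]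
    intro x hx
    exact (hker x).1 hx
  -- upgrade to residue-field linearity
  let K := R ⧸ IsLocalRing.maximalIdeal R
  let Φ : (↥(I n) ⧸ (Submodule.comap (I n).subtype (I (n + 1)))) →ₗ[K]
      (↥(I (n + k)) ⧸ (Submodule.comap (I (n + k)).subtype (I (n + k + 1)))) :=
    { toFun := ψ'
      map_add' := ψ'.map_add
      map_smul' := by
        intro c x
        obtain ⟨s, rfl⟩ := Ideal.Quotient.mk_surjective c
        have h1 : (Ideal.Quotient.mk (IsLocalRing.maximalIdeal R) s) • x = s • x := by
          rw [← algebraMap_smul K s x, Ideal.Quotient.algebraMap_eq]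
        have h2 : (Ideal.Quotient.mk (IsLocalRing.maximalIdeal R) s) • ψ' x = s • ψ' x := by
          rw [← algebraMap_smul K s (ψ' x), Ideal.Quotient.algebraMap_eq]
        simp only [RingHom.id_apply, h1, h2, map_smul] }
  have := LinearMap.rank_le_of_injective Φ hψ'inj
  rwa [hdim] at this
end

section
/- Let ν be a discrete valuation dominating a local domain (R, m_R) whose residue field extension V_ν/m_ν over R/m_R is finite of degree r. Then for every n ∈ ℕ, dim_{R/m_R}(I_n/I_{n+1}) ≤ r, where I_n = {f ∈ R : ν(f) ≥ n}. -/
/- STATEMENT 2: Let ν be a discrete valuation dominating a local domain (R, m_R) whose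
residue field extension V_ν/m_ν over R/m_R is finite of degree r. Then for every n ∈ ℕ,
dim_{R/m_R}(I_n/I_{n+1}) ≤ r, where I_n = {f ∈ R : ν(f) ≥ n}. -/
theorem stmt2 {R : Type} [CommRing R] [IsDomain R] [IsLocalRing R]
    (v : FractionRing R → ℤ)
    -- v is a valuation of the quotient field K = FractionRing R
    (hv_mul : ∀ x y : FractionRing R, x ≠ 0 → y ≠ 0 → v (x * y) = v x + v y)
    (hv_add : ∀ x y : FractionRing R, x ≠ 0 → y ≠ 0 → x + y ≠ 0 →
      min (v x) (v y) ≤ v (x + y))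
    -- the value group is ℤ (ν is discrete)
    (hv_surj : ∀ m : ℤ, ∃ x : FractionRing R, x ≠ 0 ∧ v x = m)
    -- ν dominates (R, m_R): V_ν ⊇ R and m_ν ∩ R = m_R
    (hdom : ∀ f : R, f ≠ 0 → 0 ≤ v (algebraMap R (FractionRing R) f))
    (hmax : ∀ f : R, f ≠ 0 →
      (f ∈ IsLocalRing.maximalIdeal R ↔ 0 < v (algebraMap R (FractionRing R) f)))
    -- the valuation ideals I_n = {f ∈ R : ν(f) ≥ n}
    (I : ℕ → Ideal R)
    (hI : ∀ (n : ℕ) (f : R), f ∈ I n ↔ f = 0 ∨ (n : ℤ) ≤ v (algebraMap R (FractionRing R) f))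
    (r : ℕ)
    -- the residue field extension (V_ν/m_ν : R/m_R) has a basis of r elements:
    -- a family a i of units of V_ν whose residues span V_ν/m_ν over R/m_R ...
    (a : Fin r → FractionRing R)
    (ha : ∀ i, a i ≠ 0 ∧ v (a i) = 0)
    (hspan : ∀ x : FractionRing R, (x = 0 ∨ 0 ≤ v x) → ∃ c : Fin r → R,
      x - ∑ i, algebraMap R (FractionRing R) (c i) * a i = 0 ∨
      0 < v (x - ∑ i, algebraMap R (FractionRing R) (c i) * a i))
    -- ... and whose residues are linearly independent over R/m_R
    (hind : ∀ c : Fin r → R,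
      ((∑ i, algebraMap R (FractionRing R) (c i) * a i) = 0 ∨
        0 < v (∑ i, algebraMap R (FractionRing R) (c i) * a i)) →
      ∀ i, c i ∈ IsLocalRing.maximalIdeal R)
    -- the residue field R/m_R acts on the quotients I_n/I_{n+1}, compatibly with R
    [instMod : ∀ n : ℕ, Module (R ⧸ IsLocalRing.maximalIdeal R)
      (↥(I n) ⧸ (Submodule.comap (I n).subtype (I (n + 1))))]
    [∀ n : ℕ, IsScalarTower R (R ⧸ IsLocalRing.maximalIdeal R)
      (↥(I n) ⧸ (Submodule.comap (I n).subtype (I (n + 1))))]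
    (n : ℕ) :
    Module.rank (R ⧸ IsLocalRing.maximalIdeal R)
      (↥(I n) ⧸ (Submodule.comap (I n).subtype (I (n + 1)))) ≤ (r : Cardinal) := by

  classical
  set φ : R →+* (FractionRing R) := (algebraMap R (FractionRing R) : R →+* (FractionRing R)) with hφ
  have hφinj : Function.Injective φ := IsFractionRing.injective R (FractionRing R)
  have hφne : ∀ f : R, f ≠ 0 → (φ f : (FractionRing R)) ≠ 0 := by
    intro f hf
    simpa using (map_ne_zero_iff φ hφinj).mpr hf
  -- basic valuation facts
  have hv1 : v 1 = 0 := by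
    have := hv_mul 1 1 one_ne_zero one_ne_zero
    simp at this; omega
  have hvneg : ∀ x : (FractionRing R), x ≠ 0 → v (-x) = v x := by
    intro x hx
    have hm1 : v (-1 : (FractionRing R)) = 0 := by
      have := hv_mul (-1 : (FractionRing R)) (-1 : (FractionRing R)) (by norm_num) (by norm_num)
      simp [hv1] at this; omega
    have := hv_mul (-1 : (FractionRing R)) x (by norm_num) hx
    simpa [hm1] using this
  -- the predicate "zero or positive value"
  set P : (FractionRing R) → Prop := fun x => x = 0 ∨ 0 < v x with hP
  have Pzero : P 0 := Or.inl rfl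
  have Padd : ∀ x y : (FractionRing R), P x → P y → P (x + y) := by
    intro x y hx hy
    by_cases hx0 : x = 0
    · subst hx0; rw [zero_add]; exact hy
    by_cases hy0 : y = 0
    · subst hy0; rw [add_zero]; exact hx
    by_cases hxy : x + y = 0
    · exact Or.inl hxy
    · refine Or.inr ?_
      have hmin := hv_add x y hx0 hy0 hxy
      rcases hx with rfl | hx
      · exact absurd rfl hx0
      rcases hy with rfl | hy
      · exact absurd rfl hy0
      omega
  have Pneg : ∀ x : (FractionRing R), P x → P (-x) := by
    intro x hx
    by_cases hx0 : x = 0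
    · subst hx0; rw [neg_zero]; exact Pzero
    rcases hx with rfl | hx
    · exact absurd rfl hx0
    · exact Or.inr (by rw [hvneg x hx0]; exact hx)
  have Psub : ∀ x y : (FractionRing R), P x → P y → P (x - y) := by
    intro x y hx hy
    rw [sub_eq_add_neg]; exact Padd _ _ hx (Pneg _ hy)
  have Psum : ∀ (s : Fin r → (FractionRing R)), (∀ i, P (s i)) → P (∑ i, s i) := by
    intro s hs
    exact Finset.sum_induction s P Padd Pzero (fun i _ => hs i)
  -- choose y of value n
  obtain ⟨y, hy0, hyn⟩ := hv_surj (n : ℤ)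
  have hyinv : v y⁻¹ = -(n : ℤ) := by
    have := hv_mul y y⁻¹ hy0 (inv_ne_zero hy0)
    rw [mul_inv_cancel₀ hy0, hv1] at this
    omega
  have hdivval : ∀ f : R, f ≠ 0 → v (φ f / y) = v (φ f) - n := by
    intro f hf
    rw [div_eq_mul_inv, hv_mul _ _ (hφne f hf) (inv_ne_zero hy0), hyinv]
    ring
  -- membership criteria
  have hmemI1 : ∀ f : R, f ∈ I (n+1) ↔ P (φ f / y) := by
    intro f
    by_cases hf : f = 0
    · subst hf; simp [hI, hP]
    · rw [hI]
      constructor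
      · rintro (rfl | h)
        · exact absurd rfl hf
        · exact Or.inr (by rw [hdivval f hf]; push_cast at h ⊢; omega)
      · rintro (h | h)
        · exact absurd (hφinj (by simpa [div_eq_zero_iff, hy0] using h)) hf
        · right; rw [hdivval f hf] at h; push_cast at h ⊢; omega
  -- uniqueness of coefficients mod (IsLocalRing.maximalIdeal R)
  have key : ∀ (x : (FractionRing R)) (c c' : Fin r → R),
      P (x - ∑ i, φ (c i) * a i) → P (x - ∑ i, φ (c' i) * a i) →
      ∀ i, c i - c' i ∈ (IsLocalRing.maximalIdeal R) := by
    intro x c c' hc hc'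
    have heq : (∑ i, φ ((c - c') i) * a i)
        = (x - ∑ i, φ (c' i) * a i) - (x - ∑ i, φ (c i) * a i) := by
      rw [show (x - ∑ i, φ (c' i) * a i) - (x - ∑ i, φ (c i) * a i)
          = (∑ i, φ (c i) * a i) - (∑ i, φ (c' i) * a i) by ring,
        ← Finset.sum_sub_distrib]
      refine Finset.sum_congr rfl fun i _ => ?_
      simp [sub_mul]
    have : P (∑ i, φ ((c - c') i) * a i) := by
      rw [heq]; exact Psub _ _ hc' hc
    have := hind (c - c') this
    intro i; simpa using this i
  -- coefficient function for elements of I n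
  have hPge : ∀ x : ↥(I n), ((φ (x : R) / y : (FractionRing R)) = 0 ∨ 0 ≤ v (φ (x : R) / y)) := by
    intro x
    by_cases hx : (x : R) = 0
    · left; simp [hx]
    · right
      rw [hdivval _ hx]
      rcases (hI n (x : R)).mp x.2 with h | h
      · exact absurd h hx
      · omega
  set cf : ↥(I n) → Fin r → R := fun x => Classical.choose (hspan (φ (x : R) / y) (hPge x))
    with hcf
  have hcfspec : ∀ x : ↥(I n), P (φ (x : R) / y - ∑ i, φ (cf x i) * a i) :=
    fun x => Classical.choose_spec (hspan (φ (x : R) / y) (hPge x))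
  -- the map I n → (Fin r → (R ⧸ IsLocalRing.maximalIdeal R))
  set ψf : ↥(I n) → (Fin r → (R ⧸ IsLocalRing.maximalIdeal R)) := fun x i => Ideal.Quotient.mk (IsLocalRing.maximalIdeal R) (cf x i) with hψf
  have spec : ∀ (x : ↥(I n)) (c' : Fin r → R),
      P (φ (x : R) / y - ∑ i, φ (c' i) * a i) →
      ∀ i, ψf x i = Ideal.Quotient.mk (IsLocalRing.maximalIdeal R) (c' i) := by
    intro x c' hc' i
    have := key _ _ _ (hcfspec x) hc' i
    exact (Ideal.Quotient.eq).mpr this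
  have hPmul : ∀ (s : R) (x : (FractionRing R)), P x → P (φ s * x) := by
    intro s x hx
    by_cases hs : s = 0
    · subst hs; rw [map_zero, zero_mul]; exact Pzero
    by_cases hx0 : x = 0
    · subst hx0; rw [mul_zero]; exact Pzero
    rcases hx with rfl | hx
    · exact absurd rfl hx0
    · right
      rw [hv_mul _ _ (hφne s hs) hx0]
      have := hdom s hs
      omega
  -- ψ is R-linear
  set ψ : ↥(I n) →ₗ[R] (Fin r → (R ⧸ IsLocalRing.maximalIdeal R)) :=
    { toFun := ψf
      map_add' := by
        intro x x'
        funext i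
        have hrep : (φ ((↑(x + x') : R)) / y - ∑ i, φ ((cf x + cf x') i) * a i : (FractionRing R))
            = (φ (x : R) / y - ∑ i, φ (cf x i) * a i)
              + (φ (x' : R) / y - ∑ i, φ (cf x' i) * a i) := by
          have : ((↑(x + x') : R)) = (x : R) + (x' : R) := rfl
          rw [this, map_add, show (∑ i, φ ((cf x + cf x') i) * a i)
              = (∑ i, φ (cf x i) * a i) + (∑ i, φ (cf x' i) * a i) by
            rw [← Finset.sum_add_distrib]
            exact Finset.sum_congr rfl fun i _ => by simp [add_mul]]
          ring
        have := spec (x + x') (cf x + cf x')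
          (by rw [hrep]; exact Padd _ _ (hcfspec x) (hcfspec x')) i
        rw [this]
        simp [ψf]
      map_smul' := by
        intro s x
        funext i
        have hrep : (φ ((↑(s • x) : R)) / y - ∑ i, φ ((s • cf x) i) * a i : (FractionRing R))
            = φ s * (φ (x : R) / y - ∑ i, φ (cf x i) * a i) := by
          have : ((↑(s • x) : R)) = s * (x : R) := rfl
          rw [this, map_mul, show (∑ i, φ ((s • cf x) i) * a i)
              = φ s * ∑ i, φ (cf x i) * a i by
            rw [Finset.mul_sum]
            exact Finset.sum_congr rfl fun i _ => by simp [mul_assoc]]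
          ring
        have hsp := spec (s • x) (s • cf x)
          (by rw [hrep]; exact hPmul s _ (hcfspec x)) i
        show ψf (s • x) i = ((RingHom.id R) s • ψf x) i
        rw [hsp]
        show _ = s • ψf x i
        rw [hψf]
        show _ = s • Ideal.Quotient.mk (IsLocalRing.maximalIdeal R) (cf x i)
        rw [show (s • cf x) i = s * cf x i from rfl, map_mul]
        rw [show s • Ideal.Quotient.mk (IsLocalRing.maximalIdeal R) (cf x i)
            = Ideal.Quotient.mk (IsLocalRing.maximalIdeal R) s
              * Ideal.Quotient.mk (IsLocalRing.maximalIdeal R) (cf x i) from rfl] } with hψ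
  set p : Submodule R ↥(I n) := Submodule.comap (I n).subtype (I (n + 1)) with hp
  -- kernel computations
  have hker1 : p ≤ LinearMap.ker ψ := by
    intro x hx
    have hx' : (x : R) ∈ I (n + 1) := hx
    have hPx : P (φ (x : R) / y) := (hmemI1 _).mp hx'
    have hsum : P (∑ i, φ (cf x i) * a i) := by
      have := Psub _ _ hPx (hcfspec x)
      simpa using this
    have hmem := hind (cf x) hsum
    ext i
    exact (Submodule.Quotient.mk_eq_zero _).mpr (hmem i)
  have hker2 : LinearMap.ker ψ ≤ p := by
    intro x hx
    have hx0 : ∀ i, cf x i ∈ (IsLocalRing.maximalIdeal R) := by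
      intro i
      have : ψf x i = 0 := congrFun (LinearMap.mem_ker.mp hx) i
      exact (Submodule.Quotient.mk_eq_zero _).mp this
    have hsum : P (∑ i, φ (cf x i) * a i) := by
      refine Psum _ fun i => ?_
      by_cases hci : cf x i = 0
      · rw [hci, map_zero, zero_mul]; exact Pzero
      · refine Or.inr ?_
        rw [hv_mul _ _ (hφne _ hci) (ha i).1, (ha i).2]
        have := (hmax _ hci).mp (hx0 i)
        omega
    have : P (φ (x : R) / y) := by
      have := Padd _ _ (hcfspec x) hsum
      simpa using this
    exact (hmemI1 _).mpr this
  -- lift to the quotient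
  set ψ' : (↥(I n) ⧸ p) →ₗ[R] (Fin r → (R ⧸ IsLocalRing.maximalIdeal R)) := Submodule.liftQ p ψ hker1 with hψ'
  have hinj : Function.Injective ψ' :=
    LinearMap.ker_eq_bot.mp (Submodule.ker_liftQ_eq_bot p ψ hker1 hker2)
  -- upgrade to (R ⧸ IsLocalRing.maximalIdeal R)-linearity
  have halg : ∀ s' : R, (algebraMap R (R ⧸ IsLocalRing.maximalIdeal R)) s' = Ideal.Quotient.mk (IsLocalRing.maximalIdeal R) s' := fun _ => rfl
  set g : (↥(I n) ⧸ p) →ₗ[(R ⧸ IsLocalRing.maximalIdeal R)] (Fin r → (R ⧸ IsLocalRing.maximalIdeal R)) :=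
    { toFun := ψ'
      map_add' := ψ'.map_add
      map_smul' := by
        intro s x
        obtain ⟨s', rfl⟩ := Ideal.Quotient.mk_surjective s
        show ψ' ((Ideal.Quotient.mk (IsLocalRing.maximalIdeal R) s') • x)
          = (RingHom.id _) (Ideal.Quotient.mk (IsLocalRing.maximalIdeal R) s') • ψ' x
        simp only [RingHom.id_apply]
        rw [← halg s', algebraMap_smul, map_smul, algebraMap_smul] } with hg
  have hginj : Function.Injective g := hinj
  calc Module.rank (R ⧸ IsLocalRing.maximalIdeal R) (↥(I n) ⧸ p) ≤ Module.rank (R ⧸ IsLocalRing.maximalIdeal R) (Fin r → (R ⧸ IsLocalRing.maximalIdeal R)) :=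
        LinearMap.rank_le_of_injective g hginj
    _ = (r : Cardinal) := rank_fin_fun r
end

section
/- Let ν be an algebraic discrete valuation dominating a local domain (R, m_R) with [V_ν/m_ν : R/m_R] = r finite. Then there exists n₁ ∈ ℕ such that dim_{R/m_R}(I_n/I_{n+1}) = r for all n ≥ n₁. -/
/- STATEMENT 3: Let ν be an algebraic discrete valuation dominating a local domain
(R, m_R) with [V_ν/m_ν : R/m_R] = r finite. Then there exists n₁ ∈ ℕ such that
dim_{R/m_R}(I_n/I_{n+1}) = r for all n ≥ n₁. -/
set_option maxHeartbeats 1600000 in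
theorem stmt3 {R : Type} [CommRing R] [IsDomain R] [IsLocalRing R]
    (v : FractionRing R → ℤ)
    -- v is a valuation of the quotient field K = FractionRing R
    (hv_mul : ∀ x y : FractionRing R, x ≠ 0 → y ≠ 0 → v (x * y) = v x + v y)
    (hv_add : ∀ x y : FractionRing R, x ≠ 0 → y ≠ 0 → x + y ≠ 0 →
      min (v x) (v y) ≤ v (x + y))
    -- the value group is ℤ (ν is discrete)
    (hv_surj : ∀ m : ℤ, ∃ x : FractionRing R, x ≠ 0 ∧ v x = m)
    -- ν dominates (R, m_R): V_ν ⊇ R and m_ν ∩ R = m_R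
    (hdom : ∀ f : R, f ≠ 0 → 0 ≤ v (algebraMap R (FractionRing R) f))
    (hmax : ∀ f : R, f ≠ 0 →
      (f ∈ IsLocalRing.maximalIdeal R ↔ 0 < v (algebraMap R (FractionRing R) f)))
    -- the valuation ideals I_n = {f ∈ R : ν(f) ≥ n}
    (I : ℕ → Ideal R)
    (hI : ∀ (n : ℕ) (f : R), f ∈ I n ↔ f = 0 ∨ (n : ℤ) ≤ v (algebraMap R (FractionRing R) f))
    (r : ℕ)
    -- the residue field extension (V_ν/m_ν : R/m_R) has a basis of r elements:
    -- a family a i of units of V_ν whose residues span V_ν/m_ν over R/m_R ...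
    (a : Fin r → FractionRing R)
    (ha : ∀ i, a i ≠ 0 ∧ v (a i) = 0)
    (hspan : ∀ x : FractionRing R, (x = 0 ∨ 0 ≤ v x) → ∃ c : Fin r → R,
      x - ∑ i, algebraMap R (FractionRing R) (c i) * a i = 0 ∨
      0 < v (x - ∑ i, algebraMap R (FractionRing R) (c i) * a i))
    -- ... and whose residues are linearly independent over R/m_R
    (hind : ∀ c : Fin r → R,
      ((∑ i, algebraMap R (FractionRing R) (c i) * a i) = 0 ∨
        0 < v (∑ i, algebraMap R (FractionRing R) (c i) * a i)) →
      ∀ i, c i ∈ IsLocalRing.maximalIdeal R)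
    -- the residue field R/m_R acts on the quotients I_n/I_{n+1}, compatibly with R
    [instMod : ∀ n : ℕ, Module (R ⧸ IsLocalRing.maximalIdeal R)
      (↥(I n) ⧸ (Submodule.comap (I n).subtype (I (n + 1))))]
    [∀ n : ℕ, IsScalarTower R (R ⧸ IsLocalRing.maximalIdeal R)
      (↥(I n) ⧸ (Submodule.comap (I n).subtype (I (n + 1))))]
    :
    ∃ n₁ : ℕ, ∀ n : ℕ, n₁ ≤ n →
      Module.rank (R ⧸ IsLocalRing.maximalIdeal R)
        (↥(I n) ⧸ (Submodule.comap (I n).subtype (I (n + 1)))) = (r : Cardinal) := by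
  classical
  have hinj : Function.Injective (algebraMap R (FractionRing R)) :=
    IsFractionRing.injective R (FractionRing R)
  have hne : ∀ f : R, f ≠ 0 → algebraMap R (FractionRing R) f ≠ 0 := by
    intro f hf h
    exact hf (hinj (by simpa using h))
  have hv1 : v 1 = 0 := by
    have h := hv_mul 1 1 one_ne_zero one_ne_zero
    rw [mul_one] at h; omega
  have hvpow : ∀ (f : R), f ≠ 0 → ∀ m : ℕ,
      v (algebraMap R (FractionRing R) (f ^ m)) = m * v (algebraMap R (FractionRing R) f) := by
    intro f hf m
    induction m with
    | zero => simpa using hv1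
    | succ m ih =>
      rw [pow_succ, map_mul, hv_mul _ _ (hne _ (pow_ne_zero _ hf)) (hne f hf), ih]
      push_cast; ring
  -- an element of value s and one of value s+1
  obtain ⟨z, hz0, hz1⟩ := hv_surj 1
  obtain ⟨p, q, hqm, hpq⟩ := IsFractionRing.div_surjective (A := R) z
  have hq0 : q ≠ 0 := nonZeroDivisors.ne_zero hqm
  have hqK : algebraMap R (FractionRing R) q ≠ 0 := hne q hq0
  have hpK : algebraMap R (FractionRing R) p ≠ 0 := by
    intro h; rw [h, zero_div] at hpq; exact hz0 hpq.symm
  have hp0 : p ≠ 0 := fun h => hpK (by rw [h, map_zero])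
  have hqz : algebraMap R (FractionRing R) q * z = algebraMap R (FractionRing R) p := by
    rw [← hpq]; field_simp
  have hvq : 0 ≤ v (algebraMap R (FractionRing R) q) := hdom q hq0
  have hvp : v (algebraMap R (FractionRing R) p) = v (algebraMap R (FractionRing R) q) + 1 := by
    have h := hv_mul _ z hqK hz0
    rw [hqz, hz1] at h; omega
  set s : ℕ := (v (algebraMap R (FractionRing R) q)).toNat with hs
  have hsv : (s : ℤ) = v (algebraMap R (FractionRing R) q) := Int.toNat_of_nonneg hvq
  -- all large enough values are attained by elements of R
  have hbig : ∀ n : ℕ, s * s + s ≤ n → ∃ f : R, f ≠ 0 ∧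
      v (algebraMap R (FractionRing R) f) = n := by
    intro n hn
    by_cases hs0 : s = 0
    · refine ⟨p ^ n, pow_ne_zero _ hp0, ?_⟩
      rw [hvpow p hp0 n, hvp, ← hsv, hs0]; push_cast; ring
    · have hspos : 0 < s := Nat.pos_of_ne_zero hs0
      have hblt : n % s < s := Nat.mod_lt _ hspos
      have hkb : n % s ≤ n / s := by
        have h1 : (s + 1) * s ≤ n := by nlinarith
        have h2 : s + 1 ≤ n / s := (Nat.le_div_iff_mul_le hspos).mpr h1
        omega
      refine ⟨q ^ (n / s - n % s) * p ^ (n % s),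
        mul_ne_zero (pow_ne_zero _ hq0) (pow_ne_zero _ hp0), ?_⟩
      rw [map_mul, hv_mul _ _ (hne _ (pow_ne_zero _ hq0)) (hne _ (pow_ne_zero _ hp0)),
        hvpow q hq0, hvpow p hp0, hvp, ← hsv]
      have hmod : (s : ℤ) * (n / s : ℕ) + ((n % s : ℕ) : ℤ) = n := by
        exact_mod_cast Nat.div_add_mod n s
      rw [Nat.cast_sub hkb]
      linear_combination hmod
  -- clear denominators of the a i
  have hden : ∀ i : Fin r, ∃ nu de : R, de ≠ 0 ∧
      algebraMap R (FractionRing R) nu / algebraMap R (FractionRing R) de = a i := by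
    intro i
    obtain ⟨xx, yy, hy, h⟩ := IsFractionRing.div_surjective (A := R) (a i)
    exact ⟨xx, yy, nonZeroDivisors.ne_zero hy, h⟩
  choose nume deno hden0 hdeq using hden
  have hD0 : (∏ i, deno i) ≠ 0 := Finset.prod_ne_zero_iff.mpr fun i _ => hden0 i
  have hDK : algebraMap R (FractionRing R) (∏ i, deno i) ≠ 0 := hne _ hD0
  have hvD : 0 ≤ v (algebraMap R (FractionRing R) (∏ i, deno i)) := hdom _ hD0
  set s₂ : ℕ := (v (algebraMap R (FractionRing R) (∏ i, deno i))).toNat with hs₂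
  have hs₂v : (s₂ : ℤ) = v (algebraMap R (FractionRing R) (∏ i, deno i)) :=
    Int.toNat_of_nonneg hvD
  have hclear : ∀ i : Fin r, ∃ N : R,
      algebraMap R (FractionRing R) (∏ j, deno j) * a i = algebraMap R (FractionRing R) N := by
    intro i
    refine ⟨(∏ j ∈ Finset.univ.erase i, deno j) * nume i, ?_⟩
    have hsplit : (∏ j, deno j) = deno i * ∏ j ∈ Finset.univ.erase i, deno j :=
      (Finset.mul_prod_erase Finset.univ deno (Finset.mem_univ i)).symm
    rw [← hdeq i, hsplit, map_mul, map_mul]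
    field_simp [hne (deno i) (hden0 i)]
  choose N hN using hclear
  -- main construction
  refine ⟨s * s + s + s₂, fun n hn => ?_⟩
  obtain ⟨x', hx'0, hx'v⟩ := hbig (n - s₂) (by omega)
  have hx0 : x' * (∏ i, deno i) ≠ 0 := mul_ne_zero hx'0 hD0
  have hxK : algebraMap R (FractionRing R) (x' * ∏ i, deno i) ≠ 0 := hne _ hx0
  have hvx : v (algebraMap R (FractionRing R) (x' * ∏ i, deno i)) = n := by
    rw [map_mul, hv_mul _ _ (hne _ hx'0) hDK, hx'v, ← hs₂v]
    omega
  have hbK : ∀ i, algebraMap R (FractionRing R) (x' * N i)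
      = algebraMap R (FractionRing R) (x' * ∏ j, deno j) * a i := by
    intro i
    rw [map_mul, ← hN i, map_mul]; ring
  have haK : ∀ i, a i ≠ 0 := fun i => (ha i).1
  have hb0 : ∀ i, x' * N i ≠ 0 := by
    intro i h
    have h2 := hbK i
    rw [h, map_zero] at h2
    exact (mul_ne_zero hxK (haK i)) h2.symm
  have hvb : ∀ i, v (algebraMap R (FractionRing R) (x' * N i)) = n := by
    intro i
    rw [hbK i, hv_mul _ _ hxK (haK i), hvx, (ha i).2, add_zero]
  have hbI : ∀ i, x' * N i ∈ I n := fun i =>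
    (hI n _).mpr (Or.inr (le_of_eq (hvb i).symm))
  set Q : Submodule R ↥(I n) := Submodule.comap (I n).subtype (I (n + 1)) with hQ
  set B : Fin r → ↥(I n) := fun i => ⟨x' * N i, hbI i⟩ with hB
  set β : Fin r → (↥(I n) ⧸ Q) := fun i => Submodule.mkQ Q (B i) with hβ
  have hsmul : ∀ (c : R) (m : ↥(I n) ⧸ Q),
      (Ideal.Quotient.mk (IsLocalRing.maximalIdeal R) c) • m = c • m := by
    intro c m
    rw [← Ideal.Quotient.algebraMap_eq]
    exact algebraMap_smul _ c m
  have hsum : ∀ c : Fin r → R,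
      (∑ i, (Ideal.Quotient.mk (IsLocalRing.maximalIdeal R) (c i)) • β i)
        = Submodule.mkQ Q (∑ i, c i • B i) := by
    intro c
    rw [map_sum]
    refine Finset.sum_congr rfl fun i _ => ?_
    rw [map_smul, hsmul]
  have hcoe : ∀ c : Fin r → R, ((∑ i, c i • B i : ↥(I n)) : R) = ∑ i, c i * (x' * N i) := by
    intro c
    simp [hB]
  have hmapeq : ∀ c : Fin r → R, algebraMap R (FractionRing R) (∑ i, c i * (x' * N i))
      = algebraMap R (FractionRing R) (x' * ∏ j, deno j)
        * ∑ i, algebraMap R (FractionRing R) (c i) * a i := by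
    intro c
    rw [map_sum, Finset.mul_sum]
    refine Finset.sum_congr rfl fun i _ => ?_
    rw [map_mul, hbK i]; ring
  have hli : LinearIndependent (R ⧸ IsLocalRing.maximalIdeal R) β := by
    rw [Fintype.linearIndependent_iff]
    intro g hg
    choose c hc using fun i => Ideal.Quotient.mk_surjective (g i)
    simp only [← hc] at hg
    rw [hsum c, Submodule.mkQ_apply, Submodule.Quotient.mk_eq_zero, hQ,
      Submodule.mem_comap] at hg
    have hgR : (∑ i, c i * (x' * N i)) ∈ I (n + 1) := by
      have h2 := hg
      rwa [Submodule.coe_subtype, hcoe c] at h2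
    have hmem := (hI (n+1) _).mp hgR
    have hci : ∀ j, c j ∈ IsLocalRing.maximalIdeal R := by
      by_cases hS : (∑ i, algebraMap R (FractionRing R) (c i) * a i) = 0
      · exact hind c (Or.inl hS)
      · refine hind c (Or.inr ?_)
        rcases hmem with h0 | hge
        · exfalso
          apply hS
          have h2 := hmapeq c
          rw [h0, map_zero] at h2
          exact (mul_eq_zero.mp h2.symm).resolve_left hxK
        · have h2 := hv_mul _ _ hxK hS
          rw [hmapeq c, h2, hvx] at hge
          push_cast at hge
          omega
    intro i
    rw [← hc i, Ideal.Quotient.eq_zero_iff_mem]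
    exact hci i
  have hsp : ⊤ ≤ Submodule.span (R ⧸ IsLocalRing.maximalIdeal R) (Set.range β) := by
    rintro m -
    obtain ⟨y, rfl⟩ := Submodule.mkQ_surjective Q m
    obtain ⟨f, hf⟩ := y
    by_cases hf0 : f = 0
    · subst hf0
      have h0 : (⟨(0 : R), hf⟩ : ↥(I n)) = 0 := rfl
      rw [h0, map_zero]
      exact Submodule.zero_mem _
    · have hfv : (n : ℤ) ≤ v (algebraMap R (FractionRing R) f) :=
        ((hI n f).mp hf).resolve_left hf0
      have hfK : algebraMap R (FractionRing R) f ≠ 0 := hne f hf0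
      have hy0ne : algebraMap R (FractionRing R) f
          * (algebraMap R (FractionRing R) (x' * ∏ j, deno j))⁻¹ ≠ 0 :=
        mul_ne_zero hfK (inv_ne_zero hxK)
      have hxy0 : algebraMap R (FractionRing R) (x' * ∏ j, deno j)
          * (algebraMap R (FractionRing R) f
            * (algebraMap R (FractionRing R) (x' * ∏ j, deno j))⁻¹)
          = algebraMap R (FractionRing R) f := by
        rw [mul_left_comm, mul_inv_cancel₀ hxK, mul_one]
      have hvy0 : 0 ≤ v (algebraMap R (FractionRing R) f
          * (algebraMap R (FractionRing R) (x' * ∏ j, deno j))⁻¹) := by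
        have h := hv_mul _ _ hxK hy0ne
        rw [hxy0, hvx] at h
        omega
      obtain ⟨c, hc⟩ := hspan _ (Or.inr hvy0)
      have hdiff : algebraMap R (FractionRing R) (f - ∑ i, c i * (x' * N i))
          = algebraMap R (FractionRing R) (x' * ∏ j, deno j)
            * ((algebraMap R (FractionRing R) f
              * (algebraMap R (FractionRing R) (x' * ∏ j, deno j))⁻¹)
              - ∑ i, algebraMap R (FractionRing R) (c i) * a i) := by
        rw [map_sub, mul_sub, hxy0, hmapeq c]
      have hmem2 : (f - ∑ i, c i * (x' * N i)) ∈ I (n + 1) := by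
        rw [hI]
        by_cases hS0 : (algebraMap R (FractionRing R) f
            * (algebraMap R (FractionRing R) (x' * ∏ j, deno j))⁻¹)
            - (∑ i, algebraMap R (FractionRing R) (c i) * a i) = 0
        · left
          apply hinj
          rw [hdiff, hS0, mul_zero, map_zero]
        · right
          have hpos := hc.resolve_left hS0
          have h2 := hv_mul _ _ hxK hS0
          rw [hdiff, h2, hvx]
          omega
      have heq : Submodule.mkQ Q (⟨f, hf⟩ : ↥(I n))
          = ∑ i, (Ideal.Quotient.mk (IsLocalRing.maximalIdeal R) (c i)) • β i := by
        rw [hsum c, Submodule.mkQ_apply, Submodule.mkQ_apply, Submodule.Quotient.eq, hQ,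
          Submodule.mem_comap, Submodule.coe_subtype]
        have hcoe2 : (((⟨f, hf⟩ : ↥(I n)) - ∑ i, c i • B i : ↥(I n)) : R)
            = f - ∑ i, c i * (x' * N i) := by
          rw [AddSubgroupClass.coe_sub, hcoe c]
        rw [hcoe2]
        exact hmem2
      rw [heq]
      exact Submodule.sum_mem _ fun i _ =>
        Submodule.smul_mem _ _ (Submodule.subset_span ⟨i, rfl⟩)
  have bas : Module.Basis (Fin r) (R ⧸ IsLocalRing.maximalIdeal R) (↥(I n) ⧸ Q) :=
    Module.Basis.mk hli hsp
  rw [rank_eq_card_basis bas, Fintype.card_fin]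
end

section
/- Let ν be an algebraic discrete valuation dominating a local domain (R, m_R) with [V_ν/m_ν : R/m_R] = c finite. Then there exists b ∈ ℤ such that the length ℓ_R(R/I_n) equals cn + b for all sufficiently large n. -/
/- STATEMENT 4: Let ν be an algebraic discrete valuation dominating a local domain
(R, m_R) with [V_ν/m_ν : R/m_R] = c finite. Then there exists b ∈ ℤ such that the length
ℓ_R(R/I_n) = Σ_{k=0}^{n−1} ℓ_R(I_k/I_{k+1}) equals cn + b for all sufficiently large n.
(Here ℓ_R(I_k/I_{k+1}) = dim_{R/m_R}(I_k/I_{k+1}).) -/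
theorem stmt4 {R : Type} [CommRing R] [IsDomain R] [IsLocalRing R]
    (v : FractionRing R → ℤ)
    -- v is a valuation of the quotient field K = FractionRing R
    (hv_mul : ∀ x y : FractionRing R, x ≠ 0 → y ≠ 0 → v (x * y) = v x + v y)
    (hv_add : ∀ x y : FractionRing R, x ≠ 0 → y ≠ 0 → x + y ≠ 0 →
      min (v x) (v y) ≤ v (x + y))
    -- the value group is ℤ (ν is discrete)
    (hv_surj : ∀ m : ℤ, ∃ x : FractionRing R, x ≠ 0 ∧ v x = m)
    -- ν dominates (R, m_R): V_ν ⊇ R and m_ν ∩ R = m_R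
    (hdom : ∀ f : R, f ≠ 0 → 0 ≤ v (algebraMap R (FractionRing R) f))
    (hmax : ∀ f : R, f ≠ 0 →
      (f ∈ IsLocalRing.maximalIdeal R ↔ 0 < v (algebraMap R (FractionRing R) f)))
    -- the valuation ideals I_n = {f ∈ R : ν(f) ≥ n}
    (I : ℕ → Ideal R)
    (hI : ∀ (n : ℕ) (f : R), f ∈ I n ↔ f = 0 ∨ (n : ℤ) ≤ v (algebraMap R (FractionRing R) f))
    (c : ℕ)
    -- the residue field extension (V_ν/m_ν : R/m_R) has a basis of c elements:
    -- a family a i of units of V_ν whose residues span V_ν/m_ν over R/m_R ...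
    (a : Fin c → FractionRing R)
    (ha : ∀ i, a i ≠ 0 ∧ v (a i) = 0)
    (hspan : ∀ x : FractionRing R, (x = 0 ∨ 0 ≤ v x) → ∃ c : Fin c → R,
      x - ∑ i, algebraMap R (FractionRing R) (c i) * a i = 0 ∨
      0 < v (x - ∑ i, algebraMap R (FractionRing R) (c i) * a i))
    -- ... and whose residues are linearly independent over R/m_R
    (hind : ∀ c : Fin c → R,
      ((∑ i, algebraMap R (FractionRing R) (c i) * a i) = 0 ∨
        0 < v (∑ i, algebraMap R (FractionRing R) (c i) * a i)) →
      ∀ i, c i ∈ IsLocalRing.maximalIdeal R)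
    -- the residue field R/m_R acts on the quotients I_n/I_{n+1}, compatibly with R
    [instMod : ∀ n : ℕ, Module (R ⧸ IsLocalRing.maximalIdeal R)
      (↥(I n) ⧸ (Submodule.comap (I n).subtype (I (n + 1))))]
    [∀ n : ℕ, IsScalarTower R (R ⧸ IsLocalRing.maximalIdeal R)
      (↥(I n) ⧸ (Submodule.comap (I n).subtype (I (n + 1))))]
    :
    ∃ b : ℤ, ∃ N : ℕ, ∀ n : ℕ, N ≤ n →
      ((∑ k ∈ Finset.range n, Module.finrank (R ⧸ IsLocalRing.maximalIdeal R)
        (↥(I k) ⧸ (Submodule.comap (I k).subtype (I (k + 1)))) : ℕ) : ℤ) = c * n + b := by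
  classical
  set φ : R →+* FractionRing R := (algebraMap R (FractionRing R) : R →+* FractionRing R) with hφ
  have hφa : ∀ r : R, algebraMap R (FractionRing R) r = φ r := fun r => rfl
  have hinj : ∀ f : R, f ≠ 0 → φ f ≠ 0 := fun f hf h0 =>
    hf (IsFractionRing.to_map_eq_zero_iff.mp h0)
  have hzero : ∀ f : R, φ f = 0 → f = 0 := fun f h =>
    IsFractionRing.to_map_eq_zero_iff.mp h
  have hv1 : v 1 = 0 := by
    have h := hv_mul 1 1 one_ne_zero one_ne_zero
    rw [one_mul] at h; omega
  have hφmul : ∀ f g : R, f ≠ 0 → g ≠ 0 → v (φ (f * g)) = v (φ f) + v (φ g) := by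
    intro f g hf hg; rw [map_mul]; exact hv_mul _ _ (hinj f hf) (hinj g hg)
  have hvpow : ∀ r : R, r ≠ 0 → ∀ k : ℕ, v (φ (r ^ k)) = k * v (φ r) := by
    intro r hr k
    induction k with
    | zero => simpa using hv1
    | succ n ih =>
        rw [pow_succ, hφmul _ _ (pow_ne_zero _ hr) hr, ih]; push_cast; ring
  have hvdiv : ∀ x y : FractionRing R, x ≠ 0 → y ≠ 0 → v (x / y) = v x - v y := by
    intro x y hx hy
    have h := hv_mul (x / y) y (div_ne_zero hx hy) hy
    rw [div_mul_cancel₀ _ hy] at h; omega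
  -- the value semigroup contains M and M+1 for some M
  obtain ⟨x1, hx1ne, hx1⟩ := hv_surj 1
  obtain ⟨p, q, hqnz, hpq⟩ := IsFractionRing.div_surjective (A := R) x1
  have hq0 : q ≠ 0 := nonZeroDivisors.ne_zero hqnz
  have hp0 : p ≠ 0 := by
    intro h
    rw [h, map_zero, zero_div] at hpq
    exact hx1ne hpq.symm
  have hvp : v (φ p) = v (φ q) + 1 := by
    have h1 : x1 * φ q = φ p := by
      rw [← hpq, div_mul_cancel₀ _ (hinj q hq0)]
    have h := hv_mul x1 (φ q) hx1ne (hinj q hq0)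
    rw [h1] at h; omega
  set M : ℕ := (v (φ q)).toNat with hMdef
  have hM : (M : ℤ) = v (φ q) := Int.toNat_of_nonneg (hdom q hq0)
  have hsemi : ∀ n : ℕ, M * M ≤ n → ∃ g : R, g ≠ 0 ∧ v (φ g) = (n : ℤ) := by
    intro n hn
    rcases Nat.eq_zero_or_pos M with hM0 | hMpos
    · refine ⟨p ^ n, pow_ne_zero _ hp0, ?_⟩
      rw [hvpow p hp0 n, hvp, ← hM, hM0]; push_cast; ring
    · set Q := n / M with hQdef
      set r := n % M with hrdef
      have hrM : r < M := Nat.mod_lt _ hMpos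
      have hQM : M ≤ Q := (Nat.le_div_iff_mul_le hMpos).mpr (by nlinarith)
      have hrQ : r ≤ Q := le_trans hrM.le hQM
      refine ⟨q ^ (Q - r) * p ^ r,
        mul_ne_zero (pow_ne_zero _ hq0) (pow_ne_zero _ hp0), ?_⟩
      rw [hφmul _ _ (pow_ne_zero _ hq0) (pow_ne_zero _ hp0), hvpow q hq0,
        hvpow p hp0, hvp, ← hM]
      have hn0 : M * Q + r = n := Nat.div_add_mod n M
      have hn' : (Q : ℤ) * M + r = n := by rw [mul_comm]; exact_mod_cast hn0
      have hc : ((Q - r : ℕ) : ℤ) = (Q : ℤ) - r := by omega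
      rw [hc]; linear_combination hn'
  -- common denominator for the a i
  obtain ⟨t, ht⟩ := IsLocalization.exist_integer_multiples_of_finite
    (nonZeroDivisors R) a
  have ht0 : (t : R) ≠ 0 := nonZeroDivisors.ne_zero t.2
  have ht' : ∀ i, ∃ y : R, φ y = φ (t : R) * a i := by
    intro i
    obtain ⟨y, hy⟩ := ht i
    exact ⟨y, by rw [Algebra.smul_def] at hy; exact hy⟩
  choose s hs using ht'
  set D : ℕ := (v (φ (t : R))).toNat with hDdef
  have hD : v (φ (t : R)) = (D : ℤ) := (Int.toNat_of_nonneg (hdom _ ht0)).symm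
  have hs0 : ∀ i, s i ≠ 0 := by
    intro i h
    have h2 := hs i
    rw [h, map_zero] at h2
    exact mul_ne_zero (hinj _ ht0) (ha i).1 h2.symm
  have hvs : ∀ i, v (φ (s i)) = (D : ℤ) := by
    intro i
    rw [hs i, hv_mul _ _ (hinj _ ht0) (ha i).1, (ha i).2, hD]; ring
  set N := M * M + D with hNdef
  -- main claim: the dimension of I n / I (n+1) is c for n ≥ N
  have hdim : ∀ n : ℕ, N ≤ n → Module.finrank (R ⧸ IsLocalRing.maximalIdeal R)
      (↥(I n) ⧸ (Submodule.comap (I n).subtype (I (n + 1)))) = c := by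
    intro n hn
    obtain ⟨g, hg0, hg⟩ := hsemi (n - D) (by omega)
    have hcast : ((n - D : ℕ) : ℤ) = (n : ℤ) - D := by omega
    rw [hcast] at hg
    have hvgs : ∀ i, v (φ (g * s i)) = (n : ℤ) := by
      intro i
      rw [hφmul _ _ hg0 (hs0 i), hg, hvs i]; ring
    have memI : ∀ i, g * s i ∈ I n := fun i =>
      (hI n _).mpr (Or.inr (le_of_eq (hvgs i).symm))
    have hgt0 : φ g * φ (t : R) ≠ 0 := mul_ne_zero (hinj g hg0) (hinj _ ht0)
    have hkey : ∀ r : Fin c → R,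
        φ (∑ i, r i * (g * s i)) = (φ g * φ (t : R)) * (∑ i, φ (r i) * a i) := by
      intro r
      rw [map_sum, Finset.mul_sum]
      refine Finset.sum_congr rfl fun i _ => ?_
      rw [map_mul, map_mul, hs i]; ring
    -- independence key
    have hA : ∀ r : Fin c → R, (∑ i, r i * (g * s i)) ∈ I (n + 1) →
        ∀ i, r i ∈ IsLocalRing.maximalIdeal R := by
      intro r hr
      apply hind
      by_cases hw0 : (∑ i, φ (r i) * a i) = 0
      · exact Or.inl hw0
      · right
        rcases (hI (n + 1) _).mp hr with h0 | hle
        · exfalso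
          apply hw0
          have h2 := hkey r
          rw [h0, map_zero] at h2
          rcases mul_eq_zero.mp h2.symm with h | h
          · exact absurd h hgt0
          · exact h
        · rw [hkey r,
            hv_mul _ _ hgt0 hw0, hv_mul _ _ (hinj g hg0) (hinj _ ht0), hg, hD] at hle
          push_cast at hle
          omega
    -- spanning key
    have hB : ∀ x : R, x ∈ I n →
        ∃ r : Fin c → R, x - ∑ i, r i * (g * s i) ∈ I (n + 1) := by
      intro x hx
      by_cases hx0 : x = 0
      · refine ⟨0, ?_⟩
        have h0 : (0 : R) ∈ I (n + 1) := (hI _ 0).mpr (Or.inl rfl)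
        simpa [hx0] using h0
      · have hxv : (n : ℤ) ≤ v (φ x) := ((hI n x).mp hx).resolve_left hx0
        have hy0 : φ x / (φ g * φ (t : R)) ≠ 0 := div_ne_zero (hinj x hx0) hgt0
        have hyv : 0 ≤ v (φ x / (φ g * φ (t : R))) := by
          rw [hvdiv _ _ (hinj x hx0) hgt0,
            hv_mul _ _ (hinj g hg0) (hinj _ ht0), hg, hD]
          omega
        obtain ⟨r, hr⟩ := hspan _ (Or.inr hyv)
        refine ⟨r, ?_⟩
        have hdiff : φ (x - ∑ i, r i * (g * s i)) =
            (φ g * φ (t : R)) * (φ x / (φ g * φ (t : R)) - ∑ i, φ (r i) * a i) := by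
          rw [map_sub, hkey r, mul_sub, mul_div_cancel₀ _ hgt0]
        by_cases hz : (φ x / (φ g * φ (t : R)) - ∑ i, φ (r i) * a i) = 0
        · refine (hI (n + 1) _).mpr (Or.inl (hzero _ ?_))
          rw [hdiff, hz, mul_zero]
        · have hpos : 0 < v (φ x / (φ g * φ (t : R)) - ∑ i, φ (r i) * a i) :=
            hr.resolve_left hz
          refine (hI (n + 1) _).mpr (Or.inr ?_)
          rw [hdiff, hv_mul _ _ hgt0 hz,
            hv_mul _ _ (hinj g hg0) (hinj _ ht0), hg, hD]
          push_cast
          omega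
    -- build the basis
    set J := Submodule.comap (I n).subtype (I (n + 1)) with hJ
    set e : Fin c → (↥(I n) ⧸ J) := fun i => J.mkQ ⟨g * s i, memI i⟩ with he
    have hcoe : ∀ r : Fin c → R,
        ((∑ j, r j • (⟨g * s j, memI j⟩ : I n) : I n) : R) = ∑ j, r j * (g * s j) := by
      intro r
      simp [smul_eq_mul]
    have hmksum : ∀ r : Fin c → R,
        J.mkQ (∑ j, r j • (⟨g * s j, memI j⟩ : I n)) = ∑ j, r j • e j := by
      intro r
      rw [map_sum]
      refine Finset.sum_congr rfl fun j _ => ?_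
      rw [map_smul]
    have hsmul : ∀ (r : R) (x : ↥(I n) ⧸ J),
        (Ideal.Quotient.mk (IsLocalRing.maximalIdeal R) r) • x = r • x := by
      intro r x
      rw [← Ideal.Quotient.algebraMap_eq, algebraMap_smul]
    have hli : LinearIndependent (R ⧸ IsLocalRing.maximalIdeal R) e := by
      rw [Fintype.linearIndependent_iff]
      intro cf hcf i
      choose r hr using fun j => Ideal.Quotient.mk_surjective (cf j)
      have hsum : (∑ j, r j • e j) = 0 := by
        rw [← hcf]
        refine Finset.sum_congr rfl fun j _ => ?_
        rw [← hr j, hsmul]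
      have hmem : (∑ j, r j * (g * s j)) ∈ I (n + 1) := by
        have h2 : J.mkQ (∑ j, r j • (⟨g * s j, memI j⟩ : I n)) = 0 := by
          rw [hmksum, hsum]
        rw [Submodule.mkQ_apply, Submodule.Quotient.mk_eq_zero] at h2
        have h3 : ((∑ j, r j • (⟨g * s j, memI j⟩ : I n) : I n) : R) ∈ I (n + 1) := h2
        rwa [hcoe r] at h3
      rw [← hr i, Ideal.Quotient.eq_zero_iff_mem]
      exact hA r hmem i
    have hsp : ⊤ ≤ Submodule.span (R ⧸ IsLocalRing.maximalIdeal R) (Set.range e) := by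
      rintro y -
      obtain ⟨z, rfl⟩ := J.mkQ_surjective y
      obtain ⟨r, hr⟩ := hB (z : R) z.2
      have hzz : J.mkQ z = ∑ j, (Ideal.Quotient.mk (IsLocalRing.maximalIdeal R) (r j)) • e j := by
        have h2 : J.mkQ z - J.mkQ (∑ j, r j • (⟨g * s j, memI j⟩ : I n)) = 0 := by
          rw [← map_sub, Submodule.mkQ_apply, Submodule.Quotient.mk_eq_zero,
            Submodule.mem_comap]
          have hc2 : (((z - ∑ j, r j • (⟨g * s j, memI j⟩ : I n)) : I n) : R)
              = (z : R) - ∑ j, r j * (g * s j) := by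
            rw [Submodule.coe_sub, hcoe r]
          show (((z - ∑ j, r j • (⟨g * s j, memI j⟩ : I n)) : I n) : R) ∈ I (n + 1)
          rw [hc2]
          exact hr
        rw [sub_eq_zero] at h2
        rw [h2, hmksum]
        refine Finset.sum_congr rfl fun j _ => ?_
        rw [hsmul]
      rw [hzz]
      exact Submodule.sum_mem _ fun j _ =>
        Submodule.smul_mem _ _ (Submodule.subset_span ⟨j, rfl⟩)
    have hbasis : Module.Basis (Fin c) (R ⧸ IsLocalRing.maximalIdeal R) (↥(I n) ⧸ J) :=
      Module.Basis.mk hli hsp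
    rw [Module.finrank_eq_card_basis hbasis, Fintype.card_fin]
  -- assemble
  refine ⟨((∑ k ∈ Finset.range N, Module.finrank (R ⧸ IsLocalRing.maximalIdeal R)
      (↥(I k) ⧸ (Submodule.comap (I k).subtype (I (k + 1)))) : ℕ) : ℤ) - c * N, N, ?_⟩
  intro n hn
  induction n, hn using Nat.le_induction with
  | base => push_cast; ring
  | succ n hn ih =>
      rw [Finset.sum_range_succ, hdim n hn]
      push_cast at ih ⊢
      linear_combination ih
end

section
/- Let ν be an algebraic discrete valuation dominating a local domain (R, m_R) with V_ν/m_ν finite over R/m_R. Then lim_{n→∞} ℓ_R(R/I_n)/n² = 0. -/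
section AuxPge

variable {K : Type} [Field K]

/-- `x = 0 ∨ n ≤ v x`, i.e. "v x ≥ n" with the convention v 0 = ∞. -/
private def Pge (v : K → ℤ) (x : K) (n : ℤ) : Prop := x = 0 ∨ n ≤ v x

private lemma pge_add (v : K → ℤ)
    (hv_add : ∀ x y : K, x ≠ 0 → y ≠ 0 → x + y ≠ 0 → min (v x) (v y) ≤ v (x + y))
    {x y : K} {n : ℤ} (hx : Pge v x n) (hy : Pge v y n) : Pge v (x + y) n := by
  rcases eq_or_ne x 0 with rfl | hx0
  · simpa using hy
  rcases eq_or_ne y 0 with rfl | hy0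
  · simpa using hx
  rcases eq_or_ne (x + y) 0 with h0 | h0
  · exact Or.inl h0
  · right
    have h := hv_add x y hx0 hy0 h0
    have hx' : n ≤ v x := hx.resolve_left hx0
    have hy' : n ≤ v y := hy.resolve_left hy0
    omega

private lemma pge_sum (v : K → ℤ)
    (hv_add : ∀ x y : K, x ≠ 0 → y ≠ 0 → x + y ≠ 0 → min (v x) (v y) ≤ v (x + y))
    {ι : Type*} [DecidableEq ι] (s : Finset ι) (g : ι → K) {n : ℤ}
    (h : ∀ i ∈ s, Pge v (g i) n) : Pge v (∑ i ∈ s, g i) n := by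
  induction s using Finset.induction with
  | empty => exact Or.inl (by simp)
  | insert _ _ hnm ih =>
      rw [Finset.sum_insert hnm]
      exact pge_add v hv_add (h _ (Finset.mem_insert_self _ _))
        (ih fun i hi => h i (Finset.mem_insert_of_mem hi))

private lemma pge_mul (v : K → ℤ)
    (hv_mul : ∀ x y : K, x ≠ 0 → y ≠ 0 → v (x * y) = v x + v y)
    {x y : K} {m n : ℤ} (hx : Pge v x m) (hy : Pge v y n) : Pge v (x * y) (m + n) := by
  rcases eq_or_ne x 0 with rfl | hx0
  · exact Or.inl (by simp)
  rcases eq_or_ne y 0 with rfl | hy0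
  · exact Or.inl (by simp)
  · right
    rw [hv_mul x y hx0 hy0]
    exact add_le_add (hx.resolve_left hx0) (hy.resolve_left hy0)

end AuxPge

/- STATEMENT 5: Let ν be an algebraic discrete valuation dominating a local domain
(R, m_R) with V_ν/m_ν finite over R/m_R (of some degree c). Then
lim_{n→∞} ℓ_R(R/I_n)/n² = 0, where ℓ_R(R/I_n) = Σ_{k=0}^{n−1} dim_{R/m_R}(I_k/I_{k+1}). -/
theorem stmt5 {R : Type} [CommRing R] [IsDomain R] [IsLocalRing R]
    (v : FractionRing R → ℤ)
    -- v is a valuation of the quotient field K = FractionRing R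
    (hv_mul : ∀ x y : FractionRing R, x ≠ 0 → y ≠ 0 → v (x * y) = v x + v y)
    (hv_add : ∀ x y : FractionRing R, x ≠ 0 → y ≠ 0 → x + y ≠ 0 →
      min (v x) (v y) ≤ v (x + y))
    -- the value group is ℤ (ν is discrete)
    (hv_surj : ∀ m : ℤ, ∃ x : FractionRing R, x ≠ 0 ∧ v x = m)
    -- ν dominates (R, m_R): V_ν ⊇ R and m_ν ∩ R = m_R
    (hdom : ∀ f : R, f ≠ 0 → 0 ≤ v (algebraMap R (FractionRing R) f))
    (hmax : ∀ f : R, f ≠ 0 →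
      (f ∈ IsLocalRing.maximalIdeal R ↔ 0 < v (algebraMap R (FractionRing R) f)))
    -- the valuation ideals I_n = {f ∈ R : ν(f) ≥ n}
    (I : ℕ → Ideal R)
    (hI : ∀ (n : ℕ) (f : R), f ∈ I n ↔ f = 0 ∨ (n : ℤ) ≤ v (algebraMap R (FractionRing R) f))
    (c : ℕ)
    -- the residue field extension (V_ν/m_ν : R/m_R) has a basis of c elements:
    -- a family a i of units of V_ν whose residues span V_ν/m_ν over R/m_R ...
    (a : Fin c → FractionRing R)
    (ha : ∀ i, a i ≠ 0 ∧ v (a i) = 0)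
    (hspan : ∀ x : FractionRing R, (x = 0 ∨ 0 ≤ v x) → ∃ c : Fin c → R,
      x - ∑ i, algebraMap R (FractionRing R) (c i) * a i = 0 ∨
      0 < v (x - ∑ i, algebraMap R (FractionRing R) (c i) * a i))
    -- ... and whose residues are linearly independent over R/m_R
    (hind : ∀ c : Fin c → R,
      ((∑ i, algebraMap R (FractionRing R) (c i) * a i) = 0 ∨
        0 < v (∑ i, algebraMap R (FractionRing R) (c i) * a i)) →
      ∀ i, c i ∈ IsLocalRing.maximalIdeal R)
    -- the residue field R/m_R acts on the quotients I_n/I_{n+1}, compatibly with R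
    [instMod : ∀ n : ℕ, Module (R ⧸ IsLocalRing.maximalIdeal R)
      (↥(I n) ⧸ (Submodule.comap (I n).subtype (I (n + 1))))]
    [∀ n : ℕ, IsScalarTower R (R ⧸ IsLocalRing.maximalIdeal R)
      (↥(I n) ⧸ (Submodule.comap (I n).subtype (I (n + 1))))]
    :
    Filter.Tendsto (fun n : ℕ =>
      ((∑ k ∈ Finset.range n, Module.finrank (R ⧸ IsLocalRing.maximalIdeal R)
        (↥(I k) ⧸ (Submodule.comap (I k).subtype (I (k + 1)))) : ℕ) : ℝ) / (n : ℝ) ^ 2)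
      Filter.atTop (nhds 0) := by
  classical
  set A := algebraMap R (FractionRing R) with hA
  have hAinj : Function.Injective A := IsFractionRing.injective R (FractionRing R)
  have hv1 : v 1 = 0 := by
    have h := hv_mul 1 1 one_ne_zero one_ne_zero
    rw [one_mul] at h; omega
  have hvinv : ∀ x : FractionRing R, x ≠ 0 → v x⁻¹ = - v x := by
    intro x hx
    have h := hv_mul x x⁻¹ hx (inv_ne_zero hx)
    rw [mul_inv_cancel₀ hx, hv1] at h; omega
  have hA0 : ∀ r : R, Pge v (A r) 0 := by
    intro r
    rcases eq_or_ne r 0 with rfl | h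
    · exact Or.inl (by simp)
    · exact Or.inr (hdom r h)
  have hAm : ∀ r : R, r ∈ IsLocalRing.maximalIdeal R → Pge v (A r) 1 := by
    intro r hr
    rcases eq_or_ne r 0 with rfl | h
    · exact Or.inl (by simp)
    · exact Or.inr (by have := (hmax r h).mp hr; omega)
  have hPR : ∀ (r : R) (n : ℤ), (r = 0 ∨ n ≤ v (A r)) ↔ Pge v (A r) n := by
    intro r n
    simp [Pge, map_eq_zero_iff A hAinj]
  have key : ∀ k : ℕ, Module.finrank (R ⧸ IsLocalRing.maximalIdeal R)
      (↥(I k) ⧸ (Submodule.comap (I k).subtype (I (k + 1)))) ≤ c := by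
    intro k
    obtain ⟨x, hx0, hxv⟩ := hv_surj (k : ℤ)
    have main : ∀ y : Fin (c + 1) →
        (↥(I k) ⧸ (Submodule.comap (I k).subtype (I (k + 1)))),
        ¬ LinearIndependent (R ⧸ IsLocalRing.maximalIdeal R) y := by
      intro y hLI
      choose f hf using fun j => Submodule.Quotient.mk_surjective
        (Submodule.comap (I k).subtype (I (k + 1))) (y j)
      have hfI : ∀ j, ((f j : R) = 0 ∨ (k : ℤ) ≤ v (A ((f j : R)))) :=
        fun j => (hI k (f j : R)).mp (f j).2
      have hpre : ∀ j : Fin (c + 1),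
          (A ((f j : R)) * x⁻¹ = 0 ∨ 0 ≤ v (A ((f j : R)) * x⁻¹)) := by
        intro j
        rcases eq_or_ne ((f j : R)) 0 with h0 | hne
        · exact Or.inl (by rw [h0]; simp)
        · right
          have hge := (hfI j).resolve_left hne
          have hAne : A ((f j : R)) ≠ 0 := fun hc => hne (hAinj (by simpa using hc))
          rw [hv_mul _ _ hAne (inv_ne_zero hx0), hvinv x hx0, hxv]
          omega
      choose cc hcc using fun j => hspan (A ((f j : R)) * x⁻¹) (hpre j)
      -- the residue vectors of the coefficient matrices are linearly dependent
      have hnotLI : ¬ LinearIndependent (R ⧸ IsLocalRing.maximalIdeal R)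
          (fun j : Fin (c + 1) =>
            (fun i => Ideal.Quotient.mk (IsLocalRing.maximalIdeal R) (cc j i) :
              Fin c → R ⧸ IsLocalRing.maximalIdeal R)) := by
        intro h
        have hcard := h.fintype_card_le_finrank
        simp [Module.finrank_pi] at hcard
      obtain ⟨lam, hlam0, j0, hj0⟩ := Fintype.not_linearIndependent_iff.mp hnotLI
      choose r hr using fun j => Ideal.Quotient.mk_surjective (lam j)
      have hd : ∀ i, (∑ j, r j * cc j i) ∈ IsLocalRing.maximalIdeal R := by
        intro i
        apply Ideal.Quotient.eq_zero_iff_mem.mp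
        have h0 := congrFun hlam0 i
        simp only [Finset.sum_apply, Pi.smul_apply, smul_eq_mul, Pi.zero_apply] at h0
        rw [map_sum]
        simp only [map_mul, hr]
        exact h0
      -- the combination Σ r j • f j lands in I (k+1)
      have hz : (∑ j, r j * ((f j : R))) ∈ I (k + 1) := by
        have hxP : Pge v x (k : ℤ) := Or.inr (le_of_eq hxv.symm)
        have hAN : A (∑ j, r j * ((f j : R))) =
            ((∑ j, A (r j) * (A ((f j : R)) * x⁻¹ - ∑ i, A (cc j i) * a i))
              + ∑ i, A (∑ j, r j * cc j i) * a i) * x := by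
          have hswap : (∑ i, A (∑ j, r j * cc j i) * a i)
              = ∑ j, A (r j) * (∑ i, A (cc j i) * a i) := by
            simp only [map_sum, map_mul, Finset.sum_mul, Finset.mul_sum]
            rw [Finset.sum_comm]
            exact Finset.sum_congr rfl fun j _ => Finset.sum_congr rfl fun i _ => by ring
          rw [hswap, ← Finset.sum_add_distrib, map_sum, Finset.sum_mul]
          refine Finset.sum_congr rfl fun j _ => ?_
          rw [map_mul]
          field_simp
          ring
        have hN : Pge v (A (∑ j, r j * ((f j : R)))) ((k : ℤ) + 1) := by
          rw [hAN]
          have h1 : Pge v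
              (∑ j, A (r j) * (A ((f j : R)) * x⁻¹ - ∑ i, A (cc j i) * a i)) 1 := by
            apply pge_sum v hv_add
            intro j _
            have he : Pge v (A ((f j : R)) * x⁻¹ - ∑ i, A (cc j i) * a i) 1 := by
              rcases hcc j with h | h
              · exact Or.inl h
              · exact Or.inr (by omega)
            have := pge_mul v hv_mul (hA0 (r j)) he
            simpa using this
          have h2 : Pge v (∑ i, A (∑ j, r j * cc j i) * a i) 1 := by
            apply pge_sum v hv_add
            intro i _
            have := pge_mul v hv_mul (hAm _ (hd i))
              (Or.inr (le_of_eq (ha i).2.symm) : Pge v (a i) 0)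
            simpa using this
          have hS := pge_add v hv_add h1 h2
          have hfin := pge_mul v hv_mul hS hxP
          rcases hfin with h | h
          · exact Or.inl h
          · exact Or.inr (by omega)
        rw [hI]
        have := (hPR _ ((k : ℤ) + 1)).mpr hN
        rcases this with h | h
        · exact Or.inl h
        · right; push_cast; exact h
      have hmem : (∑ j, r j • f j) ∈ Submodule.comap (I k).subtype (I (k + 1)) := by
        rw [Submodule.mem_comap, map_sum]
        simp only [Submodule.subtype_apply, SetLike.val_smul, smul_eq_mul]
        exact hz
      have h0 : Submodule.Quotient.mk (p := Submodule.comap (I k).subtype (I (k + 1)))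
          (∑ j, r j • f j) = 0 := (Submodule.Quotient.mk_eq_zero _).mpr hmem
      have hsum0 : (∑ j, lam j • y j) = 0 := by
        calc (∑ j, lam j • y j)
            = ∑ j, Submodule.Quotient.mk (p := Submodule.comap (I k).subtype (I (k + 1)))
                (r j • f j) := by
              refine Finset.sum_congr rfl fun j _ => ?_
              rw [← hf j, ← hr j, ← Ideal.Quotient.algebraMap_eq, algebraMap_smul,
                ← Submodule.Quotient.mk_smul]
          _ = Submodule.Quotient.mk (∑ j, r j • f j) := by
              simp only [← Submodule.mkQ_apply, ← map_sum]
          _ = 0 := h0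
      exact hj0 (Fintype.linearIndependent_iff.mp hLI lam hsum0 j0)
    have hrank : Module.rank (R ⧸ IsLocalRing.maximalIdeal R)
        (↥(I k) ⧸ (Submodule.comap (I k).subtype (I (k + 1)))) ≤ (c : Cardinal) := by
      apply rank_le
      intro s hs
      by_contra hcard
      push_neg at hcard
      have hcard' : Fintype.card (Fin (c + 1)) ≤ Fintype.card s := by
        simp only [Fintype.card_fin, Fintype.card_coe]
        omega
      obtain ⟨emb⟩ := Function.Embedding.nonempty_of_card_le hcard'
      exact main (fun j => ((emb j : s) : _)) (hs.comp emb emb.injective)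
    exact Module.finrank_le_of_rank_le hrank
  -- now the analysis
  apply squeeze_zero (g := fun n : ℕ => (c : ℝ) / n)
  · intro n; positivity
  · intro n
    rcases Nat.eq_zero_or_pos n with rfl | hn
    · simp
    · have hn' : (0 : ℝ) < n := by exact_mod_cast hn
      have hsumle : ((∑ k ∈ Finset.range n, Module.finrank (R ⧸ IsLocalRing.maximalIdeal R)
          (↥(I k) ⧸ (Submodule.comap (I k).subtype (I (k + 1)))) : ℕ) : ℝ) ≤ (n : ℝ) * c := by
        have : (∑ k ∈ Finset.range n, Module.finrank (R ⧸ IsLocalRing.maximalIdeal R)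
            (↥(I k) ⧸ (Submodule.comap (I k).subtype (I (k + 1))))) ≤ n * c := by
          calc (∑ k ∈ Finset.range n, Module.finrank (R ⧸ IsLocalRing.maximalIdeal R)
              (↥(I k) ⧸ (Submodule.comap (I k).subtype (I (k + 1)))))
              ≤ ∑ _k ∈ Finset.range n, c := Finset.sum_le_sum fun k _ => key k
            _ = n * c := by simp [Finset.sum_const, Finset.card_range]
        exact_mod_cast this
      calc ((∑ k ∈ Finset.range n, Module.finrank (R ⧸ IsLocalRing.maximalIdeal R)
            (↥(I k) ⧸ (Submodule.comap (I k).subtype (I (k + 1)))) : ℕ) : ℝ) / (n : ℝ) ^ 2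
          ≤ ((n : ℝ) * c) / (n : ℝ) ^ 2 := by
            gcongr
        _ = (c : ℝ) / n := by
            rw [sq, mul_div_mul_left _ _ (ne_of_gt hn')]
  · exact tendsto_const_div_atTop_nhds_zero_nat (c : ℝ)
end

section
/- Let {r_i}_{i≥0} be positive integers with r_0 = r_1 = 1 and, for each i ≥ 2, 2r_i > r_0 + ⋯ + r_i and r_{i+1} > 2r_i. For n ∈ ℕ define α(n) to be the number of tuples (n_0, n_1, …, n_m) with n_0 ∈ ℕ, n_1, …, n_m ∈ {0,1}, and n_0 + n_1 r_1 + ⋯ + n_m r_m = n (for m large enough that r_{m+1} > n; this count is independent of such m). Then for every i ≥ 1 and every integer s with r_0 + r_1 + ⋯ + r_i < s < r_{i+1}, one has α(s) = 2^i. -/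
/- STATEMENT 10: With r_0 = r_1 = 1, r_{i+1} > 2r_i for i ≥ 1, and
2r_i > r_0 + ⋯ + r_i for i ≥ 2, and α(n) the number of representations
n = n_0 + Σ_{k≥1} n_k r_k (n_0 ∈ ℕ, n_k ∈ {0,1}): for every i ≥ 1 and every s with
r_0 + r_1 + ⋯ + r_i < s < r_{i+1}, one has α(s) = 2^i. -/
theorem stmt10
    (r : ℕ → ℕ) (hr0 : r 0 = 1) (hr1 : r 1 = 1)
    (hgrow : ∀ i : ℕ, 1 ≤ i → 2 * r i < r (i + 1))
    (hbig : ∀ i : ℕ, 2 ≤ i → (∑ j ∈ Finset.range (i + 1), r j) < 2 * r i)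
    -- α n counts the representations n = n_0 + Σ_{k≥1} n_k r_k with n_0 ∈ ℕ and
    -- n_k ∈ {0,1} for k ≥ 1 (finitely many nonzero)
    (α : ℕ → ℕ)
    (hα : ∀ n : ℕ, α n = Nat.card {g : ℕ →₀ ℕ //
      (∀ k : ℕ, 1 ≤ k → g k ≤ 1) ∧ g 0 + ∑ k ∈ g.support.erase 0, g k * r k = n})
    :
    ∀ i : ℕ, 1 ≤ i → ∀ s : ℕ, (∑ j ∈ Finset.range (i + 1), r j) < s → s < r (i + 1) →
      α s = 2 ^ i := by
  intro i hi s hs1 hs2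
  rw [hα]
  -- monotonicity of r on [1, ∞)
  have hrmono : ∀ a b : ℕ, 1 ≤ a → a ≤ b → r a ≤ r b := by
    intro a b ha hab
    induction b, hab using Nat.le_induction with
    | base => exact le_rfl
    | succ n hn ih =>
        exact ih.trans ((Nat.le_mul_of_pos_left _ two_pos).trans
          (hgrow n (ha.trans hn)).le)
  have hsumIcc : (∑ k ∈ Finset.Icc 1 i, r k) + 1 = ∑ j ∈ Finset.range (i + 1), r j := by
    have h : Finset.range (i + 1) = insert 0 (Finset.Icc 1 i) := by
      ext x
      simp only [Finset.mem_range, Finset.mem_insert, Finset.mem_Icc]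
      omega
    rw [h, Finset.sum_insert (by simp), hr0]
    omega
  have hTsum : ∀ T : Finset ℕ, T ⊆ Finset.Icc 1 i → (∑ k ∈ T, r k) + 1 < s := by
    intro T hT
    have := Finset.sum_le_sum_of_subset (f := r) hT
    omega
  -- the bijection with subsets of Icc 1 i
  have e : {g : ℕ →₀ ℕ //
      (∀ k : ℕ, 1 ≤ k → g k ≤ 1) ∧ g 0 + ∑ k ∈ g.support.erase 0, g k * r k = s}
      ≃ {T : Finset ℕ // T ⊆ Finset.Icc 1 i} := by
    refine ⟨fun g => ⟨(g : {g : ℕ →₀ ℕ // _}).1.support.erase 0, ?_⟩,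
      fun T => ⟨⟨insert 0 T.1,
        fun k => if k = 0 then s - ∑ j ∈ T.1, r j else if k ∈ T.1 then 1 else 0, ?_⟩, ?_, ?_⟩,
      ?_, ?_⟩
    · -- support of a representation is ⊆ Icc 1 i
      obtain ⟨g, hg1, hg2⟩ := g
      intro k hk
      simp only [Finset.mem_erase, Finsupp.mem_support_iff] at hk
      obtain ⟨hk0, hkne⟩ := hk
      rw [Finset.mem_Icc]
      refine ⟨by omega, ?_⟩
      by_contra h
      have hik : i + 1 ≤ k := by omega
      have h1 : r (i + 1) ≤ r k := hrmono _ _ (by omega) hik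
      have h2 : g k * r k ≤ ∑ j ∈ g.support.erase 0, g j * r j := by
        refine Finset.single_le_sum (f := fun j => g j * r j) (fun _ _ => Nat.zero_le _) ?_
        simp only [Finset.mem_erase, Finsupp.mem_support_iff]
        exact ⟨hk0, hkne⟩
      have h3 : r k ≤ g k * r k := Nat.le_mul_of_pos_left _ (Nat.pos_of_ne_zero hkne)
      omega
    · -- membership condition of the Finsupp.mk
      intro a
      obtain ⟨T, hT⟩ := T
      have hbd := hTsum T hT
      constructor
      · intro ha
        rcases Finset.mem_insert.mp ha with h | h
        · subst h
          show (if (0:ℕ) = 0 then s - ∑ j ∈ T, r j else if (0:ℕ) ∈ T then 1 else 0) ≠ 0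
          rw [if_pos rfl]
          omega
        · have : a ≠ 0 := by
            have := hT h; rw [Finset.mem_Icc] at this; omega
          show (if a = 0 then s - ∑ j ∈ T, r j else if a ∈ T then 1 else 0) ≠ 0
          simp [this, h]
      · intro ha
        by_contra hmem
        simp only [Finset.mem_insert, not_or] at hmem
        obtain ⟨h0, hTn⟩ := hmem
        apply ha
        show (if a = 0 then s - ∑ j ∈ T, r j else if a ∈ T then 1 else 0) = 0
        simp [h0, hTn]
    · -- digits ≤ 1
      intro k hk
      obtain ⟨T, hT⟩ := T
      have : k ≠ 0 := by omega
      simp only [Finsupp.coe_mk, if_neg this]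
      split <;> omega
    · -- the sum is s
      obtain ⟨T, hT⟩ := T
      have hbd := hTsum T hT
      have h0T : 0 ∉ T := by
        intro h
        have := hT h; rw [Finset.mem_Icc] at this; omega
      have hsupp : ∀ (f : ℕ → ℕ) (hf : ∀ a, a ∈ insert 0 T ↔ f a ≠ 0),
          (Finsupp.mk (insert 0 T) f hf).support.erase 0 = T := by
        intro f hf
        show (insert 0 T).erase 0 = T
        rw [Finset.erase_insert h0T]
      rw [hsupp]
      simp only [Finsupp.coe_mk, reduceIte]
      have hsum : ∑ k ∈ T, (if k = 0 then s - ∑ j ∈ T, r j else if k ∈ T then 1 else 0) * r k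
          = ∑ k ∈ T, r k := by
        refine Finset.sum_congr rfl fun k hk => ?_
        have hk0 : k ≠ 0 := by
          have := hT hk; rw [Finset.mem_Icc] at this; omega
        simp [hk0, hk]
      rw [hsum]
      omega
    · -- left inverse
      rintro ⟨g, hg1, hg2⟩
      ext : 1
      apply Finsupp.ext
      intro k
      simp only [Finsupp.coe_mk]
      by_cases hk : k = 0
      · subst hk
        rw [if_pos rfl]
        have hsum : ∑ j ∈ g.support.erase 0, g j * r j = ∑ j ∈ g.support.erase 0, r j := by
          refine Finset.sum_congr rfl fun j hj => ?_
          simp only [Finset.mem_erase, Finsupp.mem_support_iff] at hj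
          have h1 : g j ≤ 1 := hg1 j (by omega)
          have : g j = 1 := by omega
          rw [this, one_mul]
        omega
      · simp only [if_neg hk]
        by_cases hmem : k ∈ g.support.erase 0
        · simp only [if_pos hmem]
          simp only [Finset.mem_erase, Finsupp.mem_support_iff] at hmem
          have h1 : g k ≤ 1 := hg1 k (by omega)
          omega
        · simp only [if_neg hmem]
          simp only [Finset.mem_erase, Finsupp.mem_support_iff, not_and, not_not] at hmem
          exact (hmem hk).symm
    · -- right inverse
      rintro ⟨T, hT⟩
      have h0T : 0 ∉ T := by
        intro h
        have := hT h; rw [Finset.mem_Icc] at this; omega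
      ext : 1
      show (insert 0 T).erase 0 = T
      rw [Finset.erase_insert h0T]
  rw [Nat.card_congr e]
  have e2 : {T : Finset ℕ // T ⊆ Finset.Icc 1 i} ≃ ↥(Finset.Icc 1 i).powerset :=
    Equiv.subtypeEquivRight fun T => (Finset.mem_powerset).symm
  rw [Nat.card_congr e2, Nat.card_eq_finsetCard, Finset.card_powerset, Nat.card_Icc]
  norm_num
end

section
/- Let {r_i} and α be as follows: r_0 = r_1 = 1, r_{i+1} > 2r_i for i ≥ 1, 2r_i > r_0 + ⋯ + r_i for i ≥ 2, and α(n) is the number of tuples (n_0, n_1, …) with n_0 ∈ ℕ, n_k ∈ {0,1} for k ≥ 1 (finitely many nonzero), and n_0 + Σ_{k≥1} n_k r_k = n. Then for every n ≥ 1, letting i be the unique index with r_i ≤ n < r_{i+1}, one has α(n) = α(r_i − 1) + min{α(r_i − 1), α(n − r_i)}. -/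
/-- The finset of admissible index sets: subsets `S` of `{1,…,n}` with `∑_{k∈S} r k ≤ n`. -/
def TT (r : ℕ → ℕ) (n : ℕ) : Finset (Finset ℕ) :=
  ((Finset.range (n+1)).powerset).filter (fun S => 0 ∉ S ∧ ∑ k ∈ S, r k ≤ n)

lemma mem_TT {r : ℕ → ℕ} {n : ℕ} {S : Finset ℕ} :
    S ∈ TT r n ↔ S ⊆ Finset.range (n+1) ∧ 0 ∉ S ∧ ∑ k ∈ S, r k ≤ n := by
  simp [TT, Finset.mem_filter, Finset.mem_powerset, and_assoc]

/- STATEMENT 11: In the same setup, for every n ≥ 1, letting i be the (unique) index with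
r_i ≤ n < r_{i+1}, one has α(n) = α(r_i − 1) + min{α(r_i − 1), α(n − r_i)}. -/
theorem stmt11
    (r : ℕ → ℕ) (hr0 : r 0 = 1) (hr1 : r 1 = 1)
    (hgrow : ∀ i : ℕ, 1 ≤ i → 2 * r i < r (i + 1))
    (hbig : ∀ i : ℕ, 2 ≤ i → (∑ j ∈ Finset.range (i + 1), r j) < 2 * r i)
    -- α n counts the representations n = n_0 + Σ_{k≥1} n_k r_k with n_0 ∈ ℕ and
    -- n_k ∈ {0,1} for k ≥ 1 (finitely many nonzero)
    (α : ℕ → ℕ)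
    (hα : ∀ n : ℕ, α n = Nat.card {g : ℕ →₀ ℕ //
      (∀ k : ℕ, 1 ≤ k → g k ≤ 1) ∧ g 0 + ∑ k ∈ g.support.erase 0, g k * r k = n})
    :
    ∀ n : ℕ, 1 ≤ n → ∀ i : ℕ, r i ≤ n → n < r (i + 1) →
      α n = α (r i - 1) + min (α (r i - 1)) (α (n - r i)) := by
  -- positivity of r
  have hpos : ∀ i, 1 ≤ r i := by
    intro i
    induction i with
    | zero => exact le_of_eq hr0.symm
    | succ j ih =>
      rcases Nat.eq_zero_or_pos j with h | h
      · subst h; exact le_of_eq hr1.symm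
      · have := hgrow j h; omega
  -- monotonicity of r on indices ≥ 1
  have hmonole : ∀ a b, 1 ≤ a → a ≤ b → r a ≤ r b := by
    intro a b ha hab
    induction b with
    | zero => omega
    | succ m ih =>
      rcases Nat.eq_or_lt_of_le hab with h | h
      · exact le_of_eq (by rw [h])
      · have h1 : r a ≤ r m := ih (by omega)
        have h2 := hgrow m (by omega)
        have := hpos m
        omega
  -- k ≤ r k
  have hler : ∀ k, k ≤ r k := by
    intro k
    induction k with
    | zero => exact Nat.zero_le _
    | succ j ih =>
      rcases Nat.eq_zero_or_pos j with h | h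
      · subst h
        rw [hr1]
      · have := hgrow j h; omega
  -- the sum of r over {1,…,i-1} is at most r i - 1
  have hsumIco : ∀ i, 1 ≤ i → (∑ j ∈ Finset.Ico 1 i, r j) ≤ r i - 1 := by
    intro i hi
    rcases Nat.lt_or_ge i 2 with h | h
    · interval_cases i
      · simp
    · have hb := hbig i h
      have h1 : (∑ j ∈ Finset.range (i+1), r j)
          = (∑ j ∈ Finset.range i, r j) + r i := Finset.sum_range_succ _ _
      have h2 : (∑ j ∈ Finset.range i, r j)
          = r 0 + ∑ j ∈ Finset.Ico 1 i, r j := by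
        rw [Finset.range_eq_Ico]
        exact Finset.sum_eq_sum_Ico_succ_bot (by omega) _
      have := hpos i
      omega
  -- α n equals the cardinality of TT r n
  have halpha : ∀ n : ℕ, α n = (TT r n).card := by
    intro n
    rw [hα n, ← Nat.card_eq_finsetCard]
    apply Nat.card_congr
    refine ⟨fun g => ⟨g.1.support.erase 0, ?_⟩,
      fun S => ⟨Finsupp.indicator (insert 0 S.1)
        (fun k _ => if k = 0 then n - ∑ j ∈ S.1, r j else 1), ?_⟩, ?_, ?_⟩
    · -- forward map lands in TT r n
      obtain ⟨g, hg1, hg2⟩ := g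
      have hone : ∀ k ∈ g.support.erase 0, g k = 1 := by
        intro k hk
        rw [Finset.mem_erase, Finsupp.mem_support_iff] at hk
        have := hg1 k (by omega)
        omega
      have hsum : (∑ k ∈ g.support.erase 0, r k) ≤ n := by
        have : (∑ k ∈ g.support.erase 0, r k)
            = ∑ k ∈ g.support.erase 0, g k * r k := by
          apply Finset.sum_congr rfl
          intro k hk; rw [hone k hk, one_mul]
        omega
      rw [mem_TT]
      refine ⟨?_, Finset.notMem_erase _ _, hsum⟩
      intro k hk
      have hk1 : 1 ≤ k := by
        rw [Finset.mem_erase] at hk; omega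
      have hrk : r k ≤ ∑ j ∈ g.support.erase 0, r j :=
        Finset.single_le_sum (fun _ _ => Nat.zero_le _) hk
      have := hler k
      simp only [Finset.mem_range]
      omega
    · -- backward map lands in the representation set
      obtain ⟨S, hS⟩ := S
      rw [mem_TT] at hS
      obtain ⟨hS1, hS2, hS3⟩ := hS
      set g := Finsupp.indicator (insert 0 S)
        (fun k _ => if k = 0 then n - ∑ j ∈ S, r j else 1) with hgdef
      have hg0 : g 0 = n - ∑ j ∈ S, r j := by
        rw [hgdef, Finsupp.indicator_apply, dif_pos (Finset.mem_insert_self _ _)]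
        simp
      have hgk : ∀ k, k ≠ 0 → g k = if k ∈ S then 1 else 0 := by
        intro k hk
        rw [hgdef, Finsupp.indicator_apply]
        by_cases h : k ∈ S
        · rw [dif_pos (Finset.mem_insert_of_mem h), if_neg hk, if_pos h]
        · rw [dif_neg, if_neg h]
          simp [hk, h]
      have hsupp : g.support.erase 0 = S := by
        ext k
        rw [Finset.mem_erase, Finsupp.mem_support_iff]
        constructor
        · rintro ⟨hk0, hk⟩
          rw [hgk k hk0] at hk
          by_contra h
          rw [if_neg h] at hk
          exact hk rfl
        · intro hk
          have hk0 : k ≠ 0 := by rintro rfl; exact hS2 hk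
          refine ⟨hk0, ?_⟩
          rw [hgk k hk0, if_pos hk]
          omega
      constructor
      · intro k hk
        rw [hgk k (by omega)]
        split <;> omega
      · rw [hsupp, hg0]
        have : (∑ k ∈ S, g k * r k) = ∑ k ∈ S, r k := by
          apply Finset.sum_congr rfl
          intro k hk
          have hk0 : k ≠ 0 := by rintro rfl; exact hS2 hk
          rw [hgk k hk0, if_pos hk, one_mul]
        rw [this]
        omega
    · -- left inverse
      rintro ⟨g, hg1, hg2⟩
      apply Subtype.ext
      apply Finsupp.ext
      intro k
      simp only
      set S := g.support.erase 0 with hSdef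
      have hone : ∀ j ∈ S, g j = 1 := by
        intro j hj
        rw [hSdef, Finset.mem_erase, Finsupp.mem_support_iff] at hj
        have := hg1 j (by omega)
        omega
      have hsum : (∑ j ∈ S, r j) = ∑ j ∈ S, g j * r j := by
        apply Finset.sum_congr rfl
        intro j hj; rw [hone j hj, one_mul]
      rcases Nat.eq_zero_or_pos k with hk | hk
      · subst hk
        rw [Finsupp.indicator_apply, dif_pos (Finset.mem_insert_self _ _)]
        split
        · omega
        · omega
      · rw [Finsupp.indicator_apply]
        by_cases h : k ∈ S
        · rw [dif_pos (Finset.mem_insert_of_mem h), if_neg (by omega)]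
          exact (hone k h).symm
        · rw [dif_neg]
          · have : g k = 0 := by
              by_contra hgk
              exact h (Finset.mem_erase.mpr ⟨by omega, Finsupp.mem_support_iff.mpr hgk⟩)
            omega
          · simp only [Finset.mem_insert]
            push_neg
            exact ⟨by omega, h⟩
    · -- right inverse
      rintro ⟨S, hS⟩
      rw [mem_TT] at hS
      obtain ⟨hS1, hS2, hS3⟩ := hS
      apply Subtype.ext
      simp only
      ext k
      rw [Finset.mem_erase, Finsupp.mem_support_iff, Finsupp.indicator_apply]
      constructor
      · rintro ⟨hk0, hk⟩
        by_cases h : k ∈ insert 0 S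
        · rw [dif_pos h] at hk
          rcases Finset.mem_insert.mp h with h' | h'
          · exact absurd h' hk0
          · exact h'
        · rw [dif_neg h] at hk; exact absurd rfl hk
      · intro hk
        have hk0 : k ≠ 0 := by rintro rfl; exact hS2 hk
        refine ⟨hk0, ?_⟩
        rw [dif_pos (Finset.mem_insert_of_mem hk), if_neg hk0]
        omega
  -- monotonicity of TT
  have hTmono : ∀ m n : ℕ, m ≤ n → TT r m ⊆ TT r n := by
    intro m n hmn S hS
    rw [mem_TT] at hS ⊢
    obtain ⟨h1, h2, h3⟩ := hS
    refine ⟨?_, h2, le_trans h3 hmn⟩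
    intro k hk
    have := h1 hk
    simp only [Finset.mem_range] at this ⊢
    omega
  -- main argument
  intro n hn i hri hni
  have hi1 : 1 ≤ i := by
    by_contra h
    push_neg at h
    interval_cases i
    rw [show (0:ℕ)+1 = 1 from rfl, hr1] at hni
    omega
  -- any element of TT r m' with m' ≤ r i - 1 is a subset of Ico 1 i
  have hsub : ∀ (m' : ℕ) (S : Finset ℕ), m' ≤ r i - 1 → S ∈ TT r m' →
      S ⊆ Finset.Ico 1 i := by
    intro m' S hm' hS k hk
    rw [mem_TT] at hS
    obtain ⟨h1, h2, h3⟩ := hS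
    have hk1 : 1 ≤ k := by
      rcases Nat.eq_zero_or_pos k with h | h
      · subst h; exact absurd hk h2
      · exact h
    have hrk : r k ≤ ∑ j ∈ S, r j :=
      Finset.single_le_sum (fun _ _ => Nat.zero_le _) hk
    have hki : k < i := by
      by_contra h
      push_neg at h
      have := hmonole i k hi1 h
      have := hpos i
      omega
    exact Finset.mem_Ico.mpr ⟨hk1, hki⟩
  -- conversely subsets of Ico 1 i are in TT r (r i - 1)
  have hsub' : ∀ S : Finset ℕ, S ⊆ Finset.Ico 1 i → S ∈ TT r (r i - 1) := by
    intro S hS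
    rw [mem_TT]
    have hsum : (∑ k ∈ S, r k) ≤ r i - 1 :=
      le_trans (Finset.sum_le_sum_of_subset hS) (hsumIco i hi1)
    refine ⟨?_, ?_, hsum⟩
    · intro k hk
      have := Finset.mem_Ico.mp (hS hk)
      have := hler i
      simp only [Finset.mem_range]
      omega
    · intro h
      have := Finset.mem_Ico.mp (hS h)
      omega
  -- elements of TT r n are bounded: every k in S satisfies k ≤ i
  have hbound : ∀ S : Finset ℕ, S ∈ TT r n → ∀ k ∈ S, 1 ≤ k ∧ k ≤ i := by
    intro S hS k hk
    rw [mem_TT] at hS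
    obtain ⟨h1, h2, h3⟩ := hS
    have hk1 : 1 ≤ k := by
      rcases Nat.eq_zero_or_pos k with h | h
      · subst h; exact absurd hk h2
      · exact h
    have hrk : r k ≤ ∑ j ∈ S, r j :=
      Finset.single_le_sum (fun _ _ => Nat.zero_le _) hk
    refine ⟨hk1, ?_⟩
    by_contra h
    push_neg at h
    have := hmonole (i+1) k (by omega) h
    omega
  set m := min (r i - 1) (n - r i) with hmdef
  have hmle : m ≤ r i - 1 := min_le_left _ _
  -- Claim A : the sets not containing i form TT r (r i - 1)
  have claimA : (TT r n).filter (fun S => ¬ (i ∈ S)) = TT r (r i - 1) := by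
    ext S
    rw [Finset.mem_filter]
    constructor
    · rintro ⟨hS, hiS⟩
      apply hsub'
      intro k hk
      have := hbound S hS k hk
      have : k ≠ i := by rintro rfl; exact hiS hk
      rw [Finset.mem_Ico]
      omega
    · intro hS
      have hSsub := hsub _ S (le_refl _) hS
      constructor
      · apply hTmono (r i - 1) n (by omega) hS
      · intro h
        have := Finset.mem_Ico.mp (hSsub h)
        omega
  -- Claim B : the sets containing i are images under insert i of TT r m
  have claimB : (TT r n).filter (fun S => i ∈ S) = (TT r m).image (insert i) := by
    ext S
    rw [Finset.mem_filter, Finset.mem_image]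
    constructor
    · rintro ⟨hS, hiS⟩
      refine ⟨S.erase i, ?_, Finset.insert_erase hiS⟩
      have hSsub : S.erase i ⊆ Finset.Ico 1 i := by
        intro k hk
        rw [Finset.mem_erase] at hk
        have := hbound S hS k hk.2
        rw [Finset.mem_Ico]
        omega
      rw [mem_TT] at hS ⊢
      obtain ⟨h1, h2, h3⟩ := hS
      have hesum : (∑ k ∈ S.erase i, r k) + r i = ∑ k ∈ S, r k :=
        Finset.sum_erase_add S _ hiS
      have hbnd1 : (∑ k ∈ S.erase i, r k) ≤ r i - 1 :=
        le_trans (Finset.sum_le_sum_of_subset hSsub) (hsumIco i hi1)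
      have hsumm : (∑ k ∈ S.erase i, r k) ≤ m := by omega
      refine ⟨?_, fun h => h2 (Finset.erase_subset _ _ h), hsumm⟩
      intro k hk
      have hk' := Finset.mem_Ico.mp (hSsub hk)
      have hrk : r k ≤ ∑ j ∈ S.erase i, r j :=
        Finset.single_le_sum (fun _ _ => Nat.zero_le _) hk
      have := hler k
      simp only [Finset.mem_range]
      omega
    · rintro ⟨S', hS', rfl⟩
      have hS'sub := hsub m S' hmle hS'
      have hiS' : i ∉ S' := by
        intro h
        have := Finset.mem_Ico.mp (hS'sub h)
        omega
      rw [mem_TT] at hS'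
      obtain ⟨h1, h2, h3⟩ := hS'
      have hsum : (∑ k ∈ insert i S', r k) = r i + ∑ k ∈ S', r k :=
        Finset.sum_insert hiS'
      refine ⟨?_, Finset.mem_insert_self _ _⟩
      rw [mem_TT]
      refine ⟨?_, ?_, ?_⟩
      · intro k hk
        rcases Finset.mem_insert.mp hk with h | h
        · have := hler i
          simp only [Finset.mem_range]
          omega
        · have := Finset.mem_Ico.mp (hS'sub h)
          have := hler i
          simp only [Finset.mem_range]
          omega
      · intro h
        rcases Finset.mem_insert.mp h with h | h
        · omega
        · exact h2 h
      · rw [hsum]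
        have : m ≤ n - r i := min_le_right _ _
        omega
  -- cardinality of the image
  have cardB : ((TT r m).image (insert i)).card = (TT r m).card := by
    apply Finset.card_image_of_injOn
    intro S1 h1 S2 h2 heq
    have hi1' : i ∉ S1 := by
      intro h
      have := Finset.mem_Ico.mp (hsub m S1 hmle h1 h)
      omega
    have hi2' : i ∉ S2 := by
      intro h
      have := Finset.mem_Ico.mp (hsub m S2 hmle h2 h)
      omega
    have : (insert i S1).erase i = (insert i S2).erase i := by rw [heq]
    rwa [Finset.erase_insert hi1', Finset.erase_insert hi2'] at this
  -- combine
  have hsplit : (TT r n).card = (TT r (r i - 1)).card + (TT r m).card := by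
    have := Finset.card_filter_add_card_filter_not
      (s := TT r n) (p := fun S => i ∈ S)
    rw [claimA, claimB, cardB] at this
    omega
  -- min of cardinalities
  have hmincard : min (α (r i - 1)) (α (n - r i)) = (TT r m).card := by
    rw [halpha, halpha]
    rcases le_total (r i - 1) (n - r i) with h | h
    · have hm : m = r i - 1 := min_eq_left h
      have hle := Finset.card_le_card (hTmono _ _ h)
      rw [hm]
      omega
    · have hm : m = n - r i := min_eq_right h
      have hle := Finset.card_le_card (hTmono _ _ h)
      rw [hm]
      omega
  rw [halpha n, hsplit, hmincard, halpha (r i - 1)]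
end

section
/- Let θ ∈ ℝ_{≥0}, let e_2 = ⌊2θ⌋, e_j ∈ {0,1} for j ≥ 3 the greedy binary digits of θ (so that R_i := θ − Σ_{k=2}^{i} e_k 2^{1−k} satisfies 0 ≤ R_i < 2^{1−i}), and define r_i = 2^i − 1 + Σ_{k=2}^{i} e_k 2^{i−k} for i ≥ 1. Then for all i ≥ 2, 2^{i−1}/r_i = 1/(2+θ) + ε_i where ε_i = (R_i + 2^{1−i}) / ((2+θ)(2+θ − R_i − 2^{1−i})) > 0. -/
/- STATEMENT 13: With θ ≥ 0, its greedy binary digits e_j (remainders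
R_i = θ − Σ_{k=2}^{i} e_k 2^{1−k} ∈ [0, 2^{1−i})), and r_i = 2^i − 1 + Σ_{k=2}^{i} e_k 2^{i−k}:
for all i ≥ 2, 2^{i−1}/r_i = 1/(2+θ) + ε_i where
ε_i = (R_i + 2^{1−i}) / ((2+θ)(2+θ − R_i − 2^{1−i})) > 0. -/
theorem stmt13
    (θ : ℝ) (hθ : 0 ≤ θ) (e : ℕ → ℕ)
    -- the digits e_j are the greedy binary expansion digits of θ
    (he2 : e 2 = ⌊2 * θ⌋₊)
    (hej : ∀ j : ℕ, 3 ≤ j → e j ≤ 1)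
    (hrem : ∀ j : ℕ, 2 ≤ j →
      0 ≤ θ - ∑ k ∈ Finset.Icc 2 j, (e k : ℝ) * 2 ^ ((1 : ℤ) - (k : ℤ)) ∧
      θ - ∑ k ∈ Finset.Icc 2 j, (e k : ℝ) * 2 ^ ((1 : ℤ) - (k : ℤ)) < 2 ^ ((1 : ℤ) - (j : ℤ)))
    (r : ℕ → ℕ)
    (hri : ∀ i : ℕ, 1 ≤ i → r i = 2 ^ i - 1 + ∑ k ∈ Finset.Icc 2 i, e k * 2 ^ (i - k)) :
    ∀ i : ℕ, 2 ≤ i →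
      (2 : ℝ) ^ ((i : ℤ) - 1) / (r i : ℝ) =
        1 / (2 + θ) +
          ((θ - ∑ k ∈ Finset.Icc 2 i, (e k : ℝ) * 2 ^ ((1 : ℤ) - (k : ℤ))) + 2 ^ ((1 : ℤ) - (i : ℤ)))
            / ((2 + θ) * (2 + θ - (θ - ∑ k ∈ Finset.Icc 2 i, (e k : ℝ) * 2 ^ ((1 : ℤ) - (k : ℤ)))
                - 2 ^ ((1 : ℤ) - (i : ℤ)))) ∧
      0 < ((θ - ∑ k ∈ Finset.Icc 2 i, (e k : ℝ) * 2 ^ ((1 : ℤ) - (k : ℤ))) + 2 ^ ((1 : ℤ) - (i : ℤ)))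
            / ((2 + θ) * (2 + θ - (θ - ∑ k ∈ Finset.Icc 2 i, (e k : ℝ) * 2 ^ ((1 : ℤ) - (k : ℤ)))
                - 2 ^ ((1 : ℤ) - (i : ℤ)))) := by
  intro i hi
  set S : ℝ := ∑ k ∈ Finset.Icc 2 i, (e k : ℝ) * 2 ^ ((1 : ℤ) - (k : ℤ)) with hS
  have hS0 : 0 ≤ S := by
    apply Finset.sum_nonneg
    intro k _
    positivity
  -- powers
  have hpow : (0 : ℝ) < 2 ^ ((i : ℤ) - 1) := by positivity
  have hpowsmall : (2 : ℝ) ^ ((1 : ℤ) - (i : ℤ)) ≤ 1 := by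
    apply zpow_le_one_of_nonpos₀ (by norm_num)
    omega
  -- r i as a real number
  have hr : (r i : ℝ) = 2 ^ ((i : ℤ) - 1) * (2 + S) - 1 := by
    rw [hri i (by omega)]
    have h1 : (1 : ℕ) ≤ 2 ^ i := Nat.one_le_two_pow
    push_cast [h1]
    have hsum : ∑ k ∈ Finset.Icc 2 i, (e k : ℝ) * 2 ^ ((i : ℕ) - k) =
        2 ^ ((i : ℤ) - 1) * S := by
      rw [hS, Finset.mul_sum]
      apply Finset.sum_congr rfl
      intro k hk
      simp only [Finset.mem_Icc] at hk
      have : ((2 : ℝ) ^ ((i : ℕ) - k) : ℝ) = 2 ^ (((i : ℤ)) - (k : ℤ)) := by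
        rw [← zpow_natCast]
        congr 1
        omega
      rw [this, ← mul_assoc, mul_comm ((2:ℝ) ^ ((i:ℤ)-1)) (e k : ℝ), mul_assoc,
        ← zpow_add₀ (by norm_num : (2:ℝ) ≠ 0)]
      congr 2
      ring
    rw [hsum]
    have : ((2 : ℝ) ^ i) = 2 ^ ((i : ℤ) - 1) * 2 := by
      rw [← zpow_natCast (2:ℝ) i, ← zpow_add_one₀ (by norm_num : (2:ℝ) ≠ 0)]
      congr 1
      ring
    rw [this]
    ring
  -- the key denominator quantity
  have hkey : 2 + θ - (θ - S) - 2 ^ ((1 : ℤ) - (i : ℤ)) = 2 + S - 2 ^ ((1 : ℤ) - (i : ℤ)) := by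
    ring
  have hDpos : 0 < 2 + θ - (θ - S) - 2 ^ ((1 : ℤ) - (i : ℤ)) := by
    rw [hkey]; nlinarith
  have hApos : (0 : ℝ) < 2 + θ := by linarith
  have hR0 : 0 ≤ θ - S := (hrem i hi).1
  have hεpos : 0 < ((θ - S) + 2 ^ ((1 : ℤ) - (i : ℤ)))
      / ((2 + θ) * (2 + θ - (θ - S) - 2 ^ ((1 : ℤ) - (i : ℤ)))) := by
    apply div_pos
    · have : (0:ℝ) < 2 ^ ((1 : ℤ) - (i : ℤ)) := by positivity
      linarith
    · exact mul_pos hApos hDpos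
  refine ⟨?_, hεpos⟩
  -- r i = 2^{i-1} * (2 + θ - (θ-S) - 2^{1-i})
  have hr2 : (r i : ℝ) = 2 ^ ((i : ℤ) - 1) * (2 + θ - (θ - S) - 2 ^ ((1 : ℤ) - (i : ℤ))) := by
    rw [hr, hkey]
    have h21 : (2:ℝ) ^ ((i : ℤ) - 1) * 2 ^ ((1 : ℤ) - (i : ℤ)) = 1 := by
      rw [← zpow_add₀ (by norm_num : (2:ℝ) ≠ 0)]
      norm_num
    nlinarith [h21]
  rw [hr2]
  field_simp
  ring
end

section
/- With θ ∈ ℝ_{≥0}, the greedy binary digits e_j of θ, and r_i = 2^i − 1 + Σ_{k=2}^{i} e_k 2^{i−k}, one has lim_{i→∞} 2^{i−1}/r_i = 1/(2+θ), and 2^{i−1}/r_i > 1/(2+θ) for every i ≥ 2. -/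
/- STATEMENT 14: With θ ≥ 0, its greedy binary digits e_j, and
r_i = 2^i − 1 + Σ_{k=2}^{i} e_k 2^{i−k}: one has lim_{i→∞} 2^{i−1}/r_i = 1/(2+θ), and
2^{i−1}/r_i > 1/(2+θ) for every i ≥ 2. -/
theorem stmt14
    (θ : ℝ) (hθ : 0 ≤ θ) (e : ℕ → ℕ)
    -- the digits e_j are the greedy binary expansion digits of θ
    (he2 : e 2 = ⌊2 * θ⌋₊)
    (hej : ∀ j : ℕ, 3 ≤ j → e j ≤ 1)
    (hrem : ∀ j : ℕ, 2 ≤ j →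
      0 ≤ θ - ∑ k ∈ Finset.Icc 2 j, (e k : ℝ) * 2 ^ ((1 : ℤ) - (k : ℤ)) ∧
      θ - ∑ k ∈ Finset.Icc 2 j, (e k : ℝ) * 2 ^ ((1 : ℤ) - (k : ℤ)) < 2 ^ ((1 : ℤ) - (j : ℤ)))
    (r : ℕ → ℕ)
    (hri : ∀ i : ℕ, 1 ≤ i → r i = 2 ^ i - 1 + ∑ k ∈ Finset.Icc 2 i, e k * 2 ^ (i - k)) :
    Filter.Tendsto (fun i : ℕ => (2 : ℝ) ^ ((i : ℤ) - 1) / (r i : ℝ)) Filter.atTop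
      (nhds (1 / (2 + θ))) ∧
    ∀ i : ℕ, 2 ≤ i → 1 / (2 + θ) < (2 : ℝ) ^ ((i : ℤ) - 1) / (r i : ℝ) := by
  have h2θ : (0:ℝ) < 2 + θ := by linarith
  have htwo : (2:ℝ) ≠ 0 := by norm_num
  set s : ℕ → ℝ := fun i => ∑ k ∈ Finset.Icc 2 i, (e k : ℝ) * 2 ^ ((1:ℤ) - (k:ℤ)) with hs
  set f : ℕ → ℝ := fun i => 2 - 2 ^ ((1:ℤ) - (i:ℤ)) + s i with hf
  have key : ∀ i : ℕ, 2 ≤ i → (r i : ℝ) = 2 ^ ((i:ℤ) - 1) * f i := by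
    intro i hi
    have h1 : 1 ≤ 2 ^ i := Nat.one_le_two_pow
    have e1 : (2:ℝ) ^ ((i:ℤ)-1) * 2 = 2 ^ (i:ℕ) := by
      rw [← zpow_natCast (2:ℝ) i, show ((i:ℤ)) = (i - 1) + 1 by ring,
        zpow_add₀ htwo]
      norm_num
    have e2' : (2:ℝ) ^ ((i:ℤ)-1) * 2 ^ ((1:ℤ) - (i:ℤ)) = 1 := by
      rw [← zpow_add₀ htwo]; norm_num
    have e3 : ∀ k ∈ Finset.Icc 2 i,
        (e k:ℝ) * (2:ℝ) ^ (i - k : ℕ) = 2 ^ ((i:ℤ)-1) * ((e k:ℝ) * 2 ^ ((1:ℤ)-(k:ℤ))) := by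
      intro k hk
      simp only [Finset.mem_Icc] at hk
      rw [← zpow_natCast (2:ℝ) (i - k), Nat.cast_sub hk.2,
        show ((i:ℤ) - (k:ℤ)) = ((i:ℤ)-1) + (1-(k:ℤ)) by ring, zpow_add₀ htwo]
      ring
    rw [hri i (by omega)]
    push_cast [h1]
    rw [Finset.sum_congr rfl e3, ← Finset.mul_sum, hf]
    simp only [hs]
    rw [mul_add, mul_sub, e1, e2']
  have hs_nonneg : ∀ i : ℕ, 0 ≤ s i := by
    intro i
    apply Finset.sum_nonneg
    intro k _
    positivity
  have hfpos : ∀ i : ℕ, 2 ≤ i → (0:ℝ) < f i := by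
    intro i hi
    have h1 : (2:ℝ) ^ ((1:ℤ) - (i:ℤ)) ≤ 2 ^ (-1 : ℤ) := by
      apply zpow_le_zpow_right₀ (by norm_num : (1:ℝ) ≤ 2)
      omega
    have h2 : (2:ℝ) ^ (-1 : ℤ) = 1/2 := by norm_num
    have := hs_nonneg i
    simp only [hf]
    rw [h2] at h1
    linarith
  have hflt : ∀ i : ℕ, 2 ≤ i → f i < 2 + θ := by
    intro i hi
    obtain ⟨hρ0, hρ1⟩ := hrem i hi
    have hpos : (0:ℝ) < 2 ^ ((1:ℤ) - (i:ℤ)) := by positivity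
    simp only [hf, hs]
    linarith
  have hfge : ∀ i : ℕ, 2 ≤ i → 2 + θ - 2 ^ ((2:ℤ) - (i:ℤ)) ≤ f i := by
    intro i hi
    obtain ⟨hρ0, hρ1⟩ := hrem i hi
    have h22 : (2:ℝ) ^ ((2:ℤ) - (i:ℤ)) = 2 * 2 ^ ((1:ℤ) - (i:ℤ)) := by
      rw [show ((2:ℤ) - (i:ℤ)) = 1 + (1 - (i:ℤ)) by ring, zpow_add₀ htwo]
      norm_num
    simp only [hf, hs]
    rw [h22]
    linarith
  have hdiv : ∀ i : ℕ, 2 ≤ i → (2:ℝ) ^ ((i:ℤ) - 1) / (r i : ℝ) = (f i)⁻¹ := by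
    intro i hi
    rw [key i hi, div_mul_eq_div_div, div_self (by positivity), one_div]
  have hzero : Filter.Tendsto (fun i : ℕ => (2:ℝ) ^ ((2:ℤ) - (i:ℤ))) Filter.atTop (nhds 0) := by
    have heq : (fun i : ℕ => (2:ℝ) ^ ((2:ℤ) - (i:ℤ))) = fun i : ℕ => 4 * (1/2:ℝ) ^ i := by
      funext i
      rw [zpow_sub₀ htwo, zpow_natCast]
      norm_num
      simp [one_div, inv_pow, div_eq_mul_inv, mul_comm]
    rw [heq]
    have := (tendsto_pow_atTop_nhds_zero_of_lt_one (by norm_num : (0:ℝ) ≤ 1/2)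
      (by norm_num : (1/2:ℝ) < 1)).const_mul (4:ℝ)
    simpa using this
  have hftend : Filter.Tendsto f Filter.atTop (nhds (2 + θ)) := by
    apply tendsto_of_tendsto_of_tendsto_of_le_of_le' (g := fun i : ℕ => 2 + θ - 2 ^ ((2:ℤ) - (i:ℤ)))
      (h := fun _ : ℕ => 2 + θ)
    · simpa using (tendsto_const_nhds (α := ℕ) (x := 2 + θ)).sub hzero
    · exact tendsto_const_nhds
    · filter_upwards [Filter.eventually_ge_atTop 2] with i hi using hfge i hi
    · filter_upwards [Filter.eventually_ge_atTop 2] with i hi using le_of_lt (hflt i hi)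
  constructor
  · have hlim : Filter.Tendsto (fun i : ℕ => (f i)⁻¹) Filter.atTop (nhds ((2 + θ)⁻¹)) :=
      hftend.inv₀ (ne_of_gt h2θ)
    rw [one_div]
    apply hlim.congr'
    filter_upwards [Filter.eventually_ge_atTop 2] with i hi using (hdiv i hi).symm
  · intro i hi
    rw [hdiv i hi, ← one_div, div_lt_div_iff₀ h2θ (hfpos i hi)]
    nlinarith [hflt i hi]
end

section
/- Let θ ∈ ℝ_{≥0}, let e_j be the greedy binary digits of θ (e_2 = ⌊2θ⌋, e_j ∈ {0,1} for j ≥ 3, with remainders R_i ∈ [0, 2^{1−i})), let r_0 = r_1 = 1 and r_{i+1} = 2r_i + 1 + e_{i+1}, and let α(n) count representations n = n_0 + Σ_{k≥1} n_k r_k with n_0 ∈ ℕ, n_k ∈ {0,1} for k ≥ 1. Then α(n) > n/(2+θ) for all n ≥ 0. -/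
/- STATEMENT 16: Let θ ≥ 0 with greedy binary digits e_j, let r_0 = r_1 = 1 and
r_{i+1} = 2r_i + 1 + e_{i+1}, and let α(n) count representations
n = n_0 + Σ_{k≥1} n_k r_k (n_0 ∈ ℕ, n_k ∈ {0,1}). Then α(n) > n/(2+θ) for all n ≥ 0. -/
theorem stmt16
    (θ : ℝ) (hθ : 0 ≤ θ) (e : ℕ → ℕ)
    -- the digits e_j are the greedy binary expansion digits of θ
    (he2 : e 2 = ⌊2 * θ⌋₊)
    (hej : ∀ j : ℕ, 3 ≤ j → e j ≤ 1)
    (hrem : ∀ j : ℕ, 2 ≤ j →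
      0 ≤ θ - ∑ k ∈ Finset.Icc 2 j, (e k : ℝ) * 2 ^ ((1 : ℤ) - (k : ℤ)) ∧
      θ - ∑ k ∈ Finset.Icc 2 j, (e k : ℝ) * 2 ^ ((1 : ℤ) - (k : ℤ)) < 2 ^ ((1 : ℤ) - (j : ℤ)))
    (r : ℕ → ℕ) (hr0 : r 0 = 1) (hr1 : r 1 = 1)
    (hrec : ∀ i : ℕ, 1 ≤ i → r (i + 1) = 2 * r i + 1 + e (i + 1))
    -- α n counts the representations n = n_0 + Σ_{k≥1} n_k r_k with n_0 ∈ ℕ and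
    -- n_k ∈ {0,1} for k ≥ 1 (finitely many nonzero)
    (α : ℕ → ℕ)
    (hα : ∀ n : ℕ, α n = Nat.card {g : ℕ →₀ ℕ //
      (∀ k : ℕ, 1 ≤ k → g k ≤ 1) ∧ g 0 + ∑ k ∈ g.support.erase 0, g k * r k = n})
    :
    ∀ n : ℕ, (n : ℝ) / (2 + θ) < (α n : ℝ) := by
  classical
  -- Basic facts about r
  have hr_ge : ∀ i, i ≤ r i := by
    intro i
    induction i with
    | zero => omega
    | succ j ih =>
      rcases Nat.eq_zero_or_pos j with rfl|hj
      · simp [hr1]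
      · rw [hrec j hj]; omega
  have hsum : ∀ i, ∑ j ∈ Finset.Icc 1 i, r j < r (i+1) := by
    intro i
    induction i with
    | zero => simp [hr1]
    | succ j ih =>
      rw [Finset.sum_Icc_succ_top (by omega), hrec (j+1) (by omega)]
      omega
  -- the identity r_i + 1 = 2^{i-1} (2 + σ_i)
  have hid : ∀ i : ℕ, 1 ≤ i → ((r i : ℝ) + 1) =
      2 ^ ((i:ℤ) - 1) * (2 + ∑ k ∈ Finset.Icc 2 i, (e k : ℝ) * 2 ^ ((1 : ℤ) - (k : ℤ))) := by
    intro i hi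
    induction i, hi using Nat.le_induction with
    | base => rw [hr1, Finset.Icc_eq_empty (by omega)]; norm_num
    | succ i hi ih =>
      rw [hrec i hi, Finset.sum_Icc_succ_top (by omega)]
      push_cast
      have hA : (2:ℝ)^((i:ℤ)+1-1) = 2 * 2^((i:ℤ)-1) := by
        rw [show ((i:ℤ)+1-1) = ((i:ℤ)-1)+1 by ring, zpow_add_one₀ two_ne_zero]; ring
      have hB : (2:ℝ)^((i:ℤ)+1-1) * 2^((1:ℤ)-((i:ℤ)+1)) = 1 := by
        rw [← zpow_add₀ (two_ne_zero)]; norm_num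
      linear_combination 2*ih - (2 + ∑ k ∈ Finset.Icc 2 i, (e k : ℝ) * 2 ^ ((1 : ℤ) - (k : ℤ))) * hA
        - (e (i+1):ℝ) * hB
  -- the upper bound r_{i+1} + 1 ≤ 2^i (2 + θ)
  have hF4 : ∀ i : ℕ, ((r (i+1) : ℝ) + 1) ≤ 2 ^ i * (2 + θ) := by
    intro i
    have hσ : 0 ≤ θ - ∑ k ∈ Finset.Icc 2 (i+1), (e k : ℝ) * 2 ^ ((1 : ℤ) - (k : ℤ)) := by
      rcases Nat.eq_zero_or_pos i with h | h
      · subst h; rw [Finset.Icc_eq_empty (by omega)]; simpa using hθ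
      · exact (hrem (i+1) (by omega)).1
    have h1 := hid (i+1) (by omega)
    have h2 : (2:ℝ) ^ (((i:ℕ)+1:ℤ) - 1) = 2 ^ i := by
      rw [show (((i:ℕ)+1:ℤ) - 1) = ((i:ℕ):ℤ) by ring, zpow_natCast]
    rw [h1]
    push_cast at h2 ⊢
    rw [h2]
    have hp : (0:ℝ) ≤ 2 ^ i := by positivity
    nlinarith [hp]
  -- The counting function B i m: number of subsets of {r_1, ..., r_i} with sum ≤ m
  set B : ℕ → ℕ → ℕ := fun i m =>
    (((Finset.Icc 1 i).powerset).filter (fun S => ∑ j ∈ S, r j ≤ m)).card with hB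
  have hBmono : ∀ i m, B i m ≤ B (i+1) m := by
    intro i m
    apply Finset.card_le_card
    intro S hS
    rw [Finset.mem_filter, Finset.mem_powerset] at hS ⊢
    exact ⟨hS.1.trans (Finset.Icc_subset_Icc_right (by omega)), hS.2⟩
  have hBfull : ∀ i m, (∑ j ∈ Finset.Icc 1 i, r j) ≤ m → B i m = 2 ^ i := by
    intro i m h
    simp only [hB]
    rw [Finset.filter_true_of_mem (fun S hS =>
      le_trans (Finset.sum_le_sum_of_subset (Finset.mem_powerset.mp hS)) h)]
    rw [Finset.card_powerset, Nat.card_Icc]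
    norm_num
  have hBstep : ∀ i m, r (i+1) ≤ m → B i m + B i (m - r (i+1)) ≤ B (i+1) m := by
    intro i m hRm
    set R := r (i+1)
    set F1 := ((Finset.Icc 1 i).powerset).filter (fun S => ∑ j ∈ S, r j ≤ m) with hF1
    set F2 := (((Finset.Icc 1 i).powerset).filter
      (fun S => ∑ j ∈ S, r j ≤ m - R)).image (insert (i+1)) with hF2
    have hnotmem : ∀ S : Finset ℕ, S ⊆ Finset.Icc 1 i → (i+1) ∉ S := by
      intro S hS hmem
      have := hS hmem
      rw [Finset.mem_Icc] at this; omega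
    have hcard2 : F2.card = B i (m - R) := by
      rw [hF2]
      apply Finset.card_image_of_injOn
      intro S hS T hT hST
      rw [Finset.mem_coe, Finset.mem_filter, Finset.mem_powerset] at hS hT
      have h1 := hnotmem S hS.1
      have h2 := hnotmem T hT.1
      have := congrArg (fun X => Finset.erase X (i+1)) hST
      simpa [Finset.erase_insert h1, Finset.erase_insert h2] using this
    have hsub : F1 ∪ F2 ⊆ ((Finset.Icc 1 (i+1)).powerset).filter (fun S => ∑ j ∈ S, r j ≤ m) := by
      intro S hS
      rw [Finset.mem_union] at hS
      rcases hS with h | h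
      · rw [Finset.mem_filter, Finset.mem_powerset] at h ⊢
        exact ⟨h.1.trans (Finset.Icc_subset_Icc_right (by omega)), h.2⟩
      · rw [hF2, Finset.mem_image] at h
        obtain ⟨T, hT, rfl⟩ := h
        rw [Finset.mem_filter, Finset.mem_powerset] at hT ⊢
        constructor
        · intro x hx
          rw [Finset.mem_insert] at hx
          rcases hx with rfl | hx
          · rw [Finset.mem_Icc]; omega
          · exact (hT.1.trans (Finset.Icc_subset_Icc_right (by omega))) hx
        · rw [Finset.sum_insert (hnotmem T hT.1)]
          have := hT.2
          omega
    have hdisj : Disjoint F1 F2 := by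
      rw [Finset.disjoint_left]
      intro S hS1 hS2
      rw [hF1, Finset.mem_filter, Finset.mem_powerset] at hS1
      rw [hF2, Finset.mem_image] at hS2
      obtain ⟨T, hT, rfl⟩ := hS2
      exact hnotmem _ hS1.1 (Finset.mem_insert_self _ _)
    calc B i m + B i (m - R) = F1.card + F2.card := by rw [hcard2]
      _ = (F1 ∪ F2).card := (Finset.card_union_of_disjoint hdisj).symm
      _ ≤ B (i+1) m := Finset.card_le_card hsub
  -- Main induction: B i m > min(m, r_{i+1} - 2) / (2 + θ)
  have hc : (0:ℝ) < 2 + θ := by linarith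
  have hmain : ∀ i m : ℕ, ((min m (r (i+1) - 2) : ℕ) : ℝ) / (2 + θ) < B i m := by
    intro i
    induction i with
    | zero =>
      intro m
      have h0 : B 0 m = 1 := by simpa using hBfull 0 m (by simp)
      rw [h0, hr1]
      simp only [Nat.cast_one]
      have : (min m (1 - 2) : ℕ) = 0 := by omega
      rw [this]
      simpa using hc
    | succ i ih =>
      intro m
      have hRpos : 1 ≤ r (i+1) := hr_ge (i+1) |>.trans' (by omega)
      set R := r (i+1) with hR
      have hf4 : ((R : ℝ) + 1) ≤ 2 ^ i * (2 + θ) := hF4 i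
      have hs : ∑ j ∈ Finset.Icc 1 i, r j < R := hsum i
      rcases lt_trichotomy (m + 1) R with hcase | hcase | hcase
      · -- m + 2 ≤ R
        have hmin : min m (r (i+2) - 2) ≤ min m (R - 2) := by
          have : min m (R-2) = m := by omega
          omega
        calc ((min m (r (i+2) - 2) : ℕ) : ℝ) / (2 + θ)
            ≤ ((min m (R - 2) : ℕ) : ℝ) / (2 + θ) := by
              gcongr
          _ < B i m := ih m
          _ ≤ B (i+1) m := Nat.cast_le.mpr (hBmono i m)
      · -- m = R - 1
        have hBim : B i m = 2 ^ i := hBfull i m (by omega)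
        have hle : (2^i : ℕ) ≤ B (i+1) m := hBim ▸ hBmono i m
        rw [div_lt_iff₀ hc]
        have h1 : ((min m (r (i+2) - 2) : ℕ) : ℝ) ≤ (m : ℝ) := Nat.cast_le.mpr (min_le_left _ _)
        have h2 : ((2:ℝ)^i) ≤ (B (i+1) m : ℝ) := by
          calc ((2:ℝ)^i) = ((2^i : ℕ) : ℝ) := by push_cast; ring
            _ ≤ _ := Nat.cast_le.mpr hle
        have h3 : (m : ℝ) = (R : ℝ) - 1 := by
          have : (m : ℕ) + 1 = R := hcase
          push_cast [← this]; ring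
        nlinarith
      · -- R ≤ m
        have hRm : R ≤ m := by omega
        have hstep := hBstep i m hRm
        have hBim : B i m = 2 ^ i := hBfull i m (by omega)
        set k := m - R with hk
        rcases le_or_gt (m + 2) (2 * R) with hc2 | hc2
        · -- R ≤ m ≤ 2R - 2
          have hkk : k ≤ R - 2 := by omega
          have hihk := ih k
          rw [show min k (R - 2) = k from by omega] at hihk
          have hihk' : (k : ℝ) < (B i k : ℝ) * (2 + θ) := (div_lt_iff₀ hc).mp hihk
          rw [div_lt_iff₀ hc]
          have h1 : ((min m (r (i+2) - 2) : ℕ) : ℝ) ≤ (m : ℝ) := Nat.cast_le.mpr (min_le_left _ _)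
          have h2 : ((2:ℝ)^i + (B i k : ℝ)) ≤ (B (i+1) m : ℝ) := by
            calc ((2:ℝ)^i + (B i k : ℝ)) = ((2^i + B i k : ℕ) : ℝ) := by push_cast; ring
              _ ≤ _ := Nat.cast_le.mpr (by rw [← hBim]; exact hstep)
          have h3 : (m : ℝ) = (R : ℝ) + (k : ℝ) := by
            rw [hk]; push_cast [Nat.cast_sub hRm]; ring
          nlinarith
        · -- m ≥ 2R - 1
          have hBik : B i k = 2 ^ i := hBfull i k (by omega)
          have hle : (2^i + 2^i : ℕ) ≤ B (i+1) m :=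
            calc (2^i + 2^i : ℕ) = B i m + B i k := by rw [hBim, hBik]
              _ ≤ _ := hstep
          rw [div_lt_iff₀ hc]
          have h1 : ((min m (r (i+2) - 2) : ℕ) : ℝ) ≤ ((r (i+2) : ℕ) : ℝ) := by
            apply Nat.cast_le.mpr; omega
          have h2 : ((2:ℝ)^i + (2:ℝ)^i) ≤ (B (i+1) m : ℝ) := by
            calc ((2:ℝ)^i + (2:ℝ)^i) = ((2^i + 2^i : ℕ) : ℝ) := by push_cast; ring
              _ ≤ _ := Nat.cast_le.mpr hle
          have hf4' : ((r (i+2) : ℝ) + 1) ≤ 2 ^ (i+1) * (2 + θ) := hF4 (i+1)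
          have hpow : (2:ℝ)^(i+1) = 2^i + 2^i := by ring
          nlinarith
  -- Now relate α n to B (n+2) n via an injection of subsets into representations
  intro n
  set F := (((Finset.Icc 1 (n+2)).powerset).filter (fun S => ∑ j ∈ S, r j ≤ n)) with hF
  set Reps := {g : ℕ →₀ ℕ //
      (∀ k : ℕ, 1 ≤ k → g k ≤ 1) ∧ g 0 + ∑ k ∈ g.support.erase 0, g k * r k = n} with hReps
  have hfin : Finite Reps := by
    have hbound : ∀ g : Reps, ∀ k, n < k → (g : ℕ →₀ ℕ) k = 0 := by
      rintro ⟨g, hg1, hg2⟩ k hk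
      by_contra hne
      have hks : k ∈ g.support.erase 0 := by
        rw [Finset.mem_erase, Finsupp.mem_support_iff]
        exact ⟨by omega, hne⟩
      have hterm : g k * r k ≤ ∑ j ∈ g.support.erase 0, g j * r j :=
        Finset.single_le_sum (f := fun j => g j * r j) (fun j _ => Nat.zero_le _) hks
      have hrk : k ≤ r k := hr_ge k
      have : 1 ≤ g k := Nat.one_le_iff_ne_zero.mpr hne
      nlinarith
    have hval : ∀ g : Reps, ∀ k, (g : ℕ →₀ ℕ) k ≤ n + 1 := by
      rintro ⟨g, hg1, hg2⟩ k
      rcases Nat.eq_zero_or_pos k with rfl|hk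
      · show g 0 ≤ n + 1
        omega
      · exact (hg1 k hk).trans (by omega)
    apply Finite.of_injective (fun g : Reps => (fun k : Fin (n+1) =>
      (⟨(g : ℕ →₀ ℕ) k, by have := hval g k; omega⟩ : Fin (n+2))))
    intro g h hgh
    ext1
    ext k
    rcases le_or_gt k n with hle|hlt
    · have := congrFun hgh ⟨k, by omega⟩
      simpa using congrArg (Fin.val) this
    · rw [hbound g k hlt, hbound h k hlt]
  have h0notmem : ∀ S : Finset ℕ, S ∈ F → (0:ℕ) ∉ S := by
    intro S hS h0
    rw [hF, Finset.mem_filter, Finset.mem_powerset] at hS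
    have := hS.1 h0
    rw [Finset.mem_Icc] at this; omega
  set gfun : Finset ℕ → (ℕ →₀ ℕ) := fun S => Finsupp.onFinset (insert 0 S)
    (fun k => if k = 0 then n - ∑ j ∈ S, r j else if k ∈ S then 1 else 0)
    (by
      intro a ha
      rcases eq_or_ne a 0 with rfl|h
      · exact Finset.mem_insert_self _ _
      · by_cases h2 : a ∈ S
        · exact Finset.mem_insert_of_mem h2
        · exfalso
          apply ha
          show (if a = 0 then n - ∑ j ∈ S, r j else if a ∈ S then 1 else 0) = 0
          rw [if_neg h, if_neg h2]) with hgfun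
  have hgval0 : ∀ S, gfun S 0 = n - ∑ j ∈ S, r j := by
    intro S; simp [hgfun, Finsupp.onFinset_apply]
  have hgvalk : ∀ S, ∀ k, k ≠ 0 → gfun S k = if k ∈ S then 1 else 0 := by
    intro S k hk; simp [hgfun, Finsupp.onFinset_apply, hk]
  have hgsupp : ∀ S : Finset ℕ, (0:ℕ) ∉ S → (gfun S).support.erase 0 = S := by
    intro S h0
    ext k
    rw [Finset.mem_erase, Finsupp.mem_support_iff]
    constructor
    · rintro ⟨hk0, hkne⟩
      rw [hgvalk S k hk0] at hkne
      split_ifs at hkne with h2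
      · exact h2
      · exact absurd rfl hkne
    · intro hkS
      have hk0 : k ≠ 0 := fun h => h0 (h ▸ hkS)
      refine ⟨hk0, ?_⟩
      rw [hgvalk S k hk0, if_pos hkS]
      omega
  have hmem : ∀ S : Finset ℕ, S ∈ F →
      (∀ k : ℕ, 1 ≤ k → gfun S k ≤ 1) ∧
      gfun S 0 + ∑ k ∈ (gfun S).support.erase 0, gfun S k * r k = n := by
    intro S hS
    have h0 := h0notmem S hS
    have hsle : ∑ j ∈ S, r j ≤ n := by
      rw [hF, Finset.mem_filter] at hS; exact hS.2
    constructor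
    · intro k hk
      rw [hgvalk S k (by omega)]
      split_ifs <;> omega
    · rw [hgsupp S h0, hgval0]
      have : ∑ k ∈ S, gfun S k * r k = ∑ k ∈ S, r k := by
        apply Finset.sum_congr rfl
        intro k hk
        have hk0 : k ≠ 0 := fun h => h0 (h ▸ hk)
        rw [hgvalk S k hk0, if_pos hk, one_mul]
      rw [this]
      omega
  have hcard : F.card ≤ α n := by
    have hinj : Function.Injective
        (fun S : {S // S ∈ F} => (⟨gfun S.1, hmem S.1 S.2⟩ : Reps)) := by
      rintro ⟨S, hS⟩ ⟨T, hT⟩ hST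
      have : gfun S = gfun T := congrArg Subtype.val hST
      have hs := hgsupp S (h0notmem S hS)
      have ht := hgsupp T (h0notmem T hT)
      apply Subtype.ext
      show S = T
      rw [← hs, ← ht, this]
    rw [hα n]
    calc F.card = Nat.card {S // S ∈ F} := (Nat.card_eq_finsetCard F).symm
      _ ≤ Nat.card Reps := Nat.card_le_card_of_injective _ hinj
  -- conclude
  have hkey := hmain (n+2) n
  have hminn : min n (r (n+3) - 2) = n := by
    have := hr_ge (n+3); omega
  rw [hminn] at hkey
  have hBF : B (n+2) n = F.card := by simp only [hB, hF]
  rw [hBF] at hkey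
  exact hkey.trans_le (Nat.cast_le.mpr hcard)
end

section
/- Let θ ∈ ℝ_{≥0}, with greedy binary digits e_j, sequence r_0 = r_1 = 1, r_{i+1} = 2r_i + 1 + e_{i+1}, and representation count α(n) as before. Then lim_{n→∞} α(n)/n = 1/(2+θ). -/
open Finset Filter

/- STATEMENT 17: Let θ ≥ 0 with greedy binary digits e_j, sequence r_0 = r_1 = 1,
r_{i+1} = 2r_i + 1 + e_{i+1}, and representation count α(n) as before. Then
lim_{n→∞} α(n)/n = 1/(2+θ). -/
set_option maxHeartbeats 1000000 in
theorem stmt17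
    (θ : ℝ) (hθ : 0 ≤ θ) (e : ℕ → ℕ)
    -- the digits e_j are the greedy binary expansion digits of θ
    (he2 : e 2 = ⌊2 * θ⌋₊)
    (hej : ∀ j : ℕ, 3 ≤ j → e j ≤ 1)
    (hrem : ∀ j : ℕ, 2 ≤ j →
      0 ≤ θ - ∑ k ∈ Finset.Icc 2 j, (e k : ℝ) * 2 ^ ((1 : ℤ) - (k : ℤ)) ∧
      θ - ∑ k ∈ Finset.Icc 2 j, (e k : ℝ) * 2 ^ ((1 : ℤ) - (k : ℤ)) < 2 ^ ((1 : ℤ) - (j : ℤ)))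
    (r : ℕ → ℕ) (hr0 : r 0 = 1) (hr1 : r 1 = 1)
    (hrec : ∀ i : ℕ, 1 ≤ i → r (i + 1) = 2 * r i + 1 + e (i + 1))
    -- α n counts the representations n = n_0 + Σ_{k≥1} n_k r_k with n_0 ∈ ℕ and
    -- n_k ∈ {0,1} for k ≥ 1 (finitely many nonzero)
    (α : ℕ → ℕ)
    (hα : ∀ n : ℕ, α n = Nat.card {g : ℕ →₀ ℕ //
      (∀ k : ℕ, 1 ≤ k → g k ≤ 1) ∧ g 0 + ∑ k ∈ g.support.erase 0, g k * r k = n})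
    :
    Filter.Tendsto (fun n : ℕ => (α n : ℝ) / (n : ℝ)) Filter.atTop (nhds (1 / (2 + θ))) := by
  classical
  have h2θ : (0:ℝ) < 2 + θ := by linarith
  set J : ℕ → ℕ := fun n => Nat.log 2 (n+1) + 1 with hJset
  have hJdef : ∀ n, J n = Nat.log 2 (n+1) + 1 := fun n => rfl
  -- basic growth of r
  have hrge : ∀ i : ℕ, 2^i ≤ r (i+1) := by
    intro i
    induction i with
    | zero => simp [hr1]
    | succ i ih =>
      rw [hrec (i+1) (by omega)]
      have : 2^(i+1) = 2 * 2^i := by ring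
      omega
  have h2J : ∀ i m : ℕ, 2^i ≤ m → i < J m := by
    intro i m h
    have h3 : m + 1 < 2 ^ (Nat.log 2 (m+1) + 1) := Nat.lt_pow_succ_log_self (by norm_num) (m+1)
    have h4 : 2^i < 2^(Nat.log 2 (m+1) + 1) := by omega
    have h5 := (Nat.pow_lt_pow_iff_right (a := 2) (by norm_num)).mp h4
    rw [hJdef]; exact h5
  have hiJ : ∀ i m : ℕ, r (i+1) ≤ m → i < J m :=
    fun i m h => h2J i m (le_trans (hrge i) h)
  -- the exact real formula for r
  have hform : ∀ j : ℕ, 1 ≤ j → 2*(r j : ℝ) =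
      2^(j+1) - 2 + 2^j * (∑ k ∈ Finset.Icc 2 j, (e k : ℝ) * 2 ^ ((1 : ℤ) - (k : ℤ))) := by
    intro j hj
    induction j with
    | zero => omega
    | succ j ih =>
      rcases Nat.eq_or_lt_of_le hj with h | h
      · have : j = 0 := by omega
        subst this
        simp [hr1]
        norm_num
      · have hj1 : 1 ≤ j := by omega
        have heq := hrec j hj1
        have hIcc : Finset.Icc 2 (j+1) = insert (j+1) (Finset.Icc 2 j) :=
          (Finset.insert_Icc_right_eq_Icc_add_one (by omega)).symm
        rw [hIcc, Finset.sum_insert (by simp)]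
        have hcast : ((r (j+1) : ℝ)) = 2 * (r j : ℝ) + 1 + (e (j+1) : ℝ) := by
          rw [heq]; push_cast; ring
        have hE : (2:ℝ) ^ ((1 : ℤ) - ((j+1 : ℕ) : ℤ)) = ((2:ℝ)^j)⁻¹ := by
          rw [show ((1:ℤ) - ((j+1:ℕ):ℤ)) = -(j:ℤ) by push_cast; ring]
          rw [zpow_neg, zpow_natCast]
        rw [hcast, ih hj1, hE]
        have hp : (2:ℝ)^j ≠ 0 := by positivity
        field_simp
        ring
  -- upper bound on r
  have P1 : ∀ i : ℕ, (r (i+1) : ℝ) ≤ (2+θ) * 2^i - 1 := by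
    intro i
    rcases Nat.eq_zero_or_pos i with h | h
    · subst h; simp [hr1]; linarith
    · have hf := hform (i+1) (by omega)
      have h1 := (hrem (i+1) (by omega)).1
      have hpow : (0:ℝ) < 2^(i+1) := by positivity
      set T := ∑ k ∈ Finset.Icc 2 (i+1), (e k : ℝ) * 2 ^ ((1 : ℤ) - (k : ℤ)) with hT
      have hle : 2^(i+1) * T ≤ 2^(i+1) * θ := by nlinarith
      simp only [pow_succ] at hf hle ⊢
      nlinarith
  -- lower bound on r
  have P2 : ∀ i : ℕ, 1 ≤ i → (2+θ) * 2^i ≤ (r (i+1) : ℝ) + 2 := by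
    intro i hi
    have hf := hform (i+1) (by omega)
    have h1 := (hrem (i+1) (by omega)).2
    have hpow : (0:ℝ) < 2^(i+1) := by positivity
    set T := ∑ k ∈ Finset.Icc 2 (i+1), (e k : ℝ) * 2 ^ ((1 : ℤ) - (k : ℤ)) with hT
    have hz : (2:ℝ)^(i+1) * (2:ℝ)^((1:ℤ) - ((i+1:ℕ):ℤ)) = 2 := by
      rw [show ((1:ℤ) - ((i+1:ℕ):ℤ)) = -(i:ℤ) by push_cast; ring]
      rw [zpow_neg, zpow_natCast]
      rw [pow_succ]
      field_simp
    have hlt : 2^(i+1) * θ - 2^(i+1) * T < 2 := by nlinarith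
    simp only [pow_succ] at hf hlt ⊢
    nlinarith
  -- weight versus binary value, upper
  have hwle : ∀ S : Finset ℕ,
      ((∑ i ∈ S, r (i+1) : ℕ) : ℝ) ≤ (2+θ) * ((∑ i ∈ S, 2^i : ℕ) : ℝ) := by
    intro S
    push_cast
    rw [Finset.mul_sum]
    refine Finset.sum_le_sum fun i _ => ?_
    calc ((r (i+1) : ℝ)) ≤ (2+θ) * 2^i - 1 := P1 i
      _ ≤ (2+θ) * 2^i := by linarith
  -- weight versus binary value, lower
  have hmle : ∀ S : Finset ℕ, (2+θ) * ((∑ i ∈ S, 2^i : ℕ) : ℝ) ≤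
      ((∑ i ∈ S, r (i+1) : ℕ) : ℝ) + 2*S.card + θ := by
    intro S
    push_cast
    rw [Finset.mul_sum]
    have key : ∀ i ∈ S, (2+θ) * (2:ℝ)^i ≤ (r (i+1) : ℝ) + 2 + (if i = 0 then θ else 0) := by
      intro i _
      rcases Nat.eq_zero_or_pos i with h | h
      · subst h; simp
      · simp [Nat.pos_iff_ne_zero.mp h]
        exact P2 i h
    calc ∑ i ∈ S, (2+θ) * (2:ℝ)^i ≤ ∑ i ∈ S, ((r (i+1) : ℝ) + 2 + (if i = 0 then θ else 0)) :=
          Finset.sum_le_sum key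
      _ = (∑ i ∈ S, (r (i+1) : ℝ)) + 2*S.card + (∑ i ∈ S, if i = 0 then θ else 0) := by
          rw [Finset.sum_add_distrib, Finset.sum_add_distrib, Finset.sum_const, nsmul_eq_mul]
          ring
      _ ≤ (∑ i ∈ S, (r (i+1) : ℝ)) + 2*S.card + θ := by
          gcongr
          rw [Finset.sum_ite_eq' S 0 (fun _ => θ)]
          split <;> simp [hθ]
  -- α n counts the finsets of indices with weight at most n
  have step1 : ∀ n : ℕ, α n = (((Finset.range (J n)).powerset.filter
      (fun S => (∑ i ∈ S, r (i+1)) ≤ n)) : Finset (Finset ℕ)).card := by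
    intro n
    set w : Finset ℕ → ℕ := fun S => ∑ i ∈ S, r (i+1) with hw
    set toG : Finset ℕ → (ℕ →₀ ℕ) := fun S =>
      Finsupp.single 0 (n - w S) + ∑ i ∈ S, Finsupp.single (i+1) 1 with htoG
    set toS : (ℕ →₀ ℕ) → Finset ℕ := fun g => (g.support.erase 0).image (· - 1) with htoS
    have hG0 : ∀ S, toG S 0 = n - w S := by
      intro S
      simp [htoG, Finsupp.finset_sum_apply, Finsupp.single_apply]
    have hGk : ∀ S j, toG S (j+1) = if j ∈ S then 1 else 0 := by
      intro S j
      simp only [htoG, Finsupp.add_apply, Finsupp.finset_sum_apply, Finsupp.single_apply]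
      rw [if_neg (by omega)]
      rw [show (∑ i ∈ S, if i + 1 = j + 1 then 1 else 0) = ∑ i ∈ S, if i = j then 1 else 0 by
        refine Finset.sum_congr rfl fun i _ => by simp]
      simp [Finset.sum_ite_eq' S j (fun _ => (1:ℕ))]
    have hmemS : ∀ (g : ℕ →₀ ℕ) (j : ℕ), j ∈ toS g ↔ g (j+1) ≠ 0 := by
      intro g j
      simp only [htoS, Finset.mem_image, Finset.mem_erase, Finsupp.mem_support_iff]
      constructor
      · rintro ⟨k, ⟨hk0, hgk⟩, rfl⟩
        rwa [show k - 1 + 1 = k by omega]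
      · intro h
        exact ⟨j+1, ⟨by omega, h⟩, by omega⟩
    have hGS : ∀ S, toS (toG S) = S := by
      intro S
      ext j
      rw [hmemS, hGk]
      split <;> simp_all
    have hsum : ∀ g : ℕ →₀ ℕ, (∀ k : ℕ, 1 ≤ k → g k ≤ 1) →
        ∑ k ∈ g.support.erase 0, g k * r k = w (toS g) := by
      intro g hg1
      rw [hw]
      simp only [htoS]
      rw [Finset.sum_image (fun x hx y hy hxy => by
        simp only [Finset.mem_coe, Finset.mem_erase] at hx hy
        omega)]
      refine Finset.sum_congr rfl fun k hk => ?_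
      simp only [Finset.mem_erase, Finsupp.mem_support_iff] at hk
      have h1 : g k = 1 := by
        have := hg1 k (by omega)
        omega
      rw [show k - 1 + 1 = k by omega, h1, one_mul]
    rw [hα n, ← Nat.card_eq_finsetCard]
    apply Nat.card_congr
    refine Equiv.ofBijective (fun g => ⟨toS g.1, ?_⟩) ⟨?_, ?_⟩
    · -- membership
      obtain ⟨g, hg1, hg2⟩ := g
      have hwle' : w (toS g) ≤ n := by
        rw [← hsum g hg1]; omega
      simp only [Finset.mem_filter, Finset.mem_powerset]
      refine ⟨fun i hi => ?_, hwle'⟩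
      rw [Finset.mem_range]
      refine hiJ i n (le_trans ?_ hwle')
      exact Finset.single_le_sum (f := fun i => r (i+1)) (fun i _ => Nat.zero_le _) hi
    · -- injective
      rintro ⟨g, hg1, hg2⟩ ⟨g', hg1', hg2'⟩ hgg
      simp only [Subtype.mk.injEq] at hgg ⊢
      have h0 : g 0 = g' 0 := by
        have e1 : g 0 + w (toS g) = n := by rw [← hsum g hg1]; exact hg2
        have e2 : g' 0 + w (toS g') = n := by rw [← hsum g' hg1']; exact hg2'
        rw [hgg] at e1; omega
      ext k
      cases k with
      | zero => exact h0
      | succ j =>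
        have hj : (j ∈ toS g) = (j ∈ toS g') := by rw [hgg]
        have a1 := hg1 (j+1) (by omega)
        have a2 := hg1' (j+1) (by omega)
        by_cases hc : j ∈ toS g
        · have hc' : j ∈ toS g' := by rw [← hj]; exact hc
          rw [hmemS] at hc hc'
          omega
        · have hc' : ¬ (j ∈ toS g') := by rw [← hj]; exact hc
          rw [hmemS] at hc hc'
          omega
    · -- surjective
      rintro ⟨S, hS⟩
      simp only [Finset.mem_filter, Finset.mem_powerset] at hS
      obtain ⟨hSsub, hSw⟩ := hS
      have hg1 : ∀ k : ℕ, 1 ≤ k → toG S k ≤ 1 := by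
        intro k hk
        cases k with
        | zero => omega
        | succ j => rw [hGk]; split <;> omega
      refine ⟨⟨toG S, hg1, ?_⟩, ?_⟩
      · have hSw' : w S ≤ n := hSw
        rw [hsum (toG S) hg1, hGS, hG0]
        omega
      · simp only [Subtype.mk.injEq]
        exact hGS S
  -- lower bound
  have step2 : ∀ n : ℕ, (n:ℝ)/(2+θ) ≤ (α n : ℝ) := by
    intro n
    set A : Finset (Finset ℕ) := (Finset.range (J n)).powerset.filter
        (fun S => (∑ i ∈ S, r (i+1)) ≤ n) with hA
    set M : ℕ := ⌊(n:ℝ)/(2+θ)⌋₊ + 1 with hM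
    have hcard : (Finset.range M).card ≤ A.card := by
      apply Finset.card_le_card_of_injOn (fun m => m.bitIndices.toFinset)
      · intro m hm
        rw [Finset.mem_coe, Finset.mem_range] at hm
        have hmle' : (m:ℝ) ≤ (n:ℝ)/(2+θ) := by
          have : m ≤ ⌊(n:ℝ)/(2+θ)⌋₊ := by omega
          exact (Nat.le_floor_iff (by positivity)).mp this
        have hmn : (2+θ) * (m:ℝ) ≤ (n:ℝ) := by
          rw [div_eq_mul_inv] at hmle'
          calc (2+θ) * (m:ℝ) ≤ (2+θ) * ((n:ℝ) * (2+θ)⁻¹) := by gcongr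
            _ = (n:ℝ) := by field_simp
        have hsum2 : ∑ i ∈ m.bitIndices.toFinset, 2^i = m :=
          Finset.twoPowSum_toFinset_bitIndices m
        have hwn : (∑ i ∈ m.bitIndices.toFinset, r (i+1)) ≤ n := by
          have h1 := hwle m.bitIndices.toFinset
          rw [hsum2] at h1
          have h2 : ((∑ i ∈ m.bitIndices.toFinset, r (i+1) : ℕ) : ℝ) ≤ (n:ℝ) :=
            le_trans h1 hmn
          exact_mod_cast h2
        have hmln : m ≤ n := by
          have : (m:ℝ) ≤ (n:ℝ) := by nlinarith
          exact_mod_cast this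
        rw [Finset.mem_coe, hA, Finset.mem_filter, Finset.mem_powerset]
        refine ⟨fun i hi => ?_, hwn⟩
        rw [Finset.mem_range]
        refine h2J i n (le_trans ?_ hmln)
        calc 2^i ≤ ∑ i ∈ m.bitIndices.toFinset, 2^i :=
              Finset.single_le_sum (f := fun i => 2^i) (fun i _ => Nat.zero_le _) hi
          _ = m := hsum2
      · intro a _ b _ hab
        have := congrArg (fun S => ∑ i ∈ S, 2^i) hab
        simpa [Finset.twoPowSum_toFinset_bitIndices] using this
    rw [step1 n]
    rw [Finset.card_range] at hcard
    have h1 : (n:ℝ)/(2+θ) < M := by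
      rw [hM]
      push_cast
      exact Nat.lt_floor_add_one _
    have h2 : (M:ℝ) ≤ (A.card : ℝ) := by exact_mod_cast hcard
    rw [← hA]
    linarith
  -- upper bound
  have step3 : ∀ n : ℕ, (α n : ℝ) ≤ ((n:ℝ) + 2*(J n) + θ)/(2+θ) + 1 := by
    intro n
    set A : Finset (Finset ℕ) := (Finset.range (J n)).powerset.filter
        (fun S => (∑ i ∈ S, r (i+1)) ≤ n) with hA
    set M : ℕ := ⌊((n:ℝ) + 2*(J n) + θ)/(2+θ)⌋₊ with hM
    have hcard : A.card ≤ (Finset.range (M+1)).card := by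
      apply Finset.card_le_card_of_injOn (fun S => ∑ i ∈ S, 2^i)
      · intro S hS
        rw [hA, Finset.mem_coe, Finset.mem_filter, Finset.mem_powerset] at hS
        obtain ⟨hsub, hwn⟩ := hS
        have hcardS : S.card ≤ J n := by
          calc S.card ≤ (Finset.range (J n)).card := Finset.card_le_card hsub
            _ = J n := Finset.card_range _
        have h1 : (2+θ) * ((∑ i ∈ S, 2^i : ℕ) : ℝ) ≤ (n:ℝ) + 2*(J n) + θ := by
          have h2 := hmle S
          have h3 : ((∑ i ∈ S, r (i+1) : ℕ):ℝ) ≤ (n:ℝ) := by exact_mod_cast hwn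
          have h4 : (S.card : ℝ) ≤ (J n : ℝ) := by exact_mod_cast hcardS
          linarith
        have h5 : ((∑ i ∈ S, 2^i : ℕ) : ℝ) ≤ ((n:ℝ) + 2*(J n) + θ)/(2+θ) := by
          rw [le_div_iff₀ h2θ]
          linarith
        have h6 : (∑ i ∈ S, 2^i) ≤ M := Nat.le_floor h5
        rw [Finset.mem_coe, Finset.mem_range]
        show (∑ i ∈ S, 2^i) < M + 1
        omega
      · intro a ha b hb hab
        simp only at hab
        have : (∑ i ∈ a, 2^i).bitIndices.toFinset = (∑ i ∈ b, 2^i).bitIndices.toFinset := by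
          rw [hab]
        simpa [Finset.toFinset_bitIndices_twoPowSum] using this
    rw [step1 n, ← hA]
    rw [Finset.card_range] at hcard
    have h7 : (M:ℝ) ≤ ((n:ℝ) + 2*(J n) + θ)/(2+θ) := Nat.floor_le (by positivity)
    have h8 : (A.card : ℝ) ≤ (M:ℝ) + 1 := by exact_mod_cast hcard
    linarith
  -- squeeze
  have hlog2 : (0:ℝ) < Real.log 2 := Real.log_pos (by norm_num)
  have hJle : ∀ n : ℕ, (J n : ℝ) ≤ Real.log (n+1) / Real.log 2 + 2 := by
    intro n
    have h1 : (2:ℕ)^(Nat.log 2 (n+1)) ≤ n+1 := Nat.pow_log_le_self 2 (by omega)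
    have h2 : ((2:ℝ))^(Nat.log 2 (n+1)) ≤ ((n:ℝ)+1) := by exact_mod_cast h1
    have h3 : (Nat.log 2 (n+1) : ℝ) * Real.log 2 ≤ Real.log ((n:ℝ)+1) := by
      calc (Nat.log 2 (n+1) : ℝ) * Real.log 2 = Real.log ((2:ℝ)^(Nat.log 2 (n+1))) := by
            rw [Real.log_pow]
        _ ≤ Real.log ((n:ℝ)+1) := Real.log_le_log (by positivity) h2
    have h4 : (Nat.log 2 (n+1) : ℝ) ≤ Real.log ((n:ℝ)+1) / Real.log 2 := by
      rw [le_div_iff₀ hlog2]; linarith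
    rw [hJdef]
    push_cast
    linarith
  have hlogn : Tendsto (fun n : ℕ => Real.log ((n:ℝ)+1) / ((n:ℝ)+1)) atTop (nhds 0) := by
    have h0 : Tendsto (fun x : ℝ => Real.log x / x) atTop (nhds 0) := by
      simpa using Real.isLittleO_log_id_atTop.tendsto_div_nhds_zero
    exact h0.comp (tendsto_atTop_add_const_right atTop 1 tendsto_natCast_atTop_atTop)
  have hfrac : Tendsto (fun n : ℕ => ((n:ℝ)+1) / (n:ℝ)) atTop (nhds 1) := by
    have h1 : Tendsto (fun n : ℕ => 1 + 1/(n:ℝ)) atTop (nhds 1) := by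
      simpa using (tendsto_const_nhds (x := (1:ℝ))).add tendsto_one_div_atTop_nhds_zero_nat
    refine h1.congr' ?_
    filter_upwards [eventually_ge_atTop 1] with n hn
    have : (n:ℝ) ≠ 0 := by positivity
    field_simp
  have hlogdiv : Tendsto (fun n : ℕ => Real.log ((n:ℝ)+1) / (n:ℝ)) atTop (nhds 0) := by
    have := hlogn.mul hfrac
    simp only [zero_mul] at this
    refine this.congr' ?_
    filter_upwards [eventually_ge_atTop 1] with n hn
    have h1 : (n:ℝ) ≠ 0 := by positivity
    have h2 : (n:ℝ)+1 ≠ 0 := by positivity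
    field_simp
  have hinv : Tendsto (fun n : ℕ => 1/(n:ℝ)) atTop (nhds 0) := tendsto_one_div_atTop_nhds_zero_nat
  have hJ0 : Tendsto (fun n : ℕ => (J n : ℝ) / (n:ℝ)) atTop (nhds 0) := by
    apply tendsto_of_tendsto_of_tendsto_of_le_of_le' (g := fun _ : ℕ => (0:ℝ))
      (h := fun n : ℕ => (Real.log ((n:ℝ)+1) / (n:ℝ)) * (1/Real.log 2) + 2 * (1/(n:ℝ)))
    · exact tendsto_const_nhds
    · have := (hlogdiv.mul (tendsto_const_nhds (x := 1/Real.log 2))).add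
        ((tendsto_const_nhds (x := (2:ℝ))).mul hinv)
      simpa using this
    · filter_upwards with n; positivity
    · filter_upwards [eventually_ge_atTop 1] with n hn
      have hn0 : (0:ℝ) < (n:ℝ) := by exact_mod_cast Nat.pos_of_ne_zero (by omega)
      rw [div_le_iff₀ hn0]
      have hb := hJle n
      have hexp : (Real.log ((n:ℝ)+1) / (n:ℝ) * (1/Real.log 2) + 2 * (1/(n:ℝ))) * (n:ℝ)
          = Real.log ((n:ℝ)+1) / Real.log 2 + 2 := by
        field_simp
      rw [hexp]
      exact hb
  apply tendsto_of_tendsto_of_tendsto_of_le_of_le' (g := fun _ : ℕ => 1/(2+θ))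
    (h := fun n : ℕ => 1/(2+θ) + (2/(2+θ)) * ((J n:ℝ)/(n:ℝ)) + (θ/(2+θ) + 1) * (1/(n:ℝ)))
  · exact tendsto_const_nhds
  · have := ((tendsto_const_nhds (x := 1/(2+θ))).add
      ((tendsto_const_nhds (x := 2/(2+θ))).mul hJ0)).add
      ((tendsto_const_nhds (x := θ/(2+θ) + 1)).mul hinv)
    simpa using this
  · filter_upwards [eventually_ge_atTop 1] with n hn
    have hn0 : (0:ℝ) < (n:ℝ) := by exact_mod_cast Nat.pos_of_ne_zero (by omega)
    have h1 := step2 n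
    calc 1/(2+θ) = ((n:ℝ)/(2+θ))/(n:ℝ) := by field_simp
      _ ≤ (α n : ℝ)/(n:ℝ) := by gcongr
  · filter_upwards [eventually_ge_atTop 1] with n hn
    have hn0 : (0:ℝ) < (n:ℝ) := by exact_mod_cast Nat.pos_of_ne_zero (by omega)
    have h1 := step3 n
    have h2 : (α n : ℝ)/(n:ℝ) ≤ (((n:ℝ) + 2*(J n) + θ)/(2+θ) + 1)/(n:ℝ) := by gcongr
    refine le_trans h2 (le_of_eq ?_)
    have hn' : (n:ℝ) ≠ 0 := ne_of_gt hn0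
    have h2θ' : (2+θ) ≠ 0 := ne_of_gt h2θ
    field_simp
    ring
end

section
/- Let r_0 = r_1 = 1 and r_{i+1} = 2r_i + 1 + 2^i for i ≥ 1, and let α(n) count representations n = n_0 + Σ_{k≥1} n_k r_k with n_0 ∈ ℕ and n_k ∈ {0,1}. Then lim_{n→∞} α(n)/n = 0, while α(n) ≥ 1 for all n ≥ 0. -/
open Finset Filter

/-- Auxiliary: the largest `j ≤ n` with `(j+2) * 2^j ≤ n + 1`. -/
def stmt18M (n : ℕ) : ℕ := Nat.findGreatest (fun j => (j + 2) * 2 ^ j ≤ n + 1) n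

lemma stmt18M_spec (n : ℕ) (hn : 1 ≤ n) :
    (stmt18M n + 2) * 2 ^ stmt18M n ≤ n + 1 := by
  have h0 : (0 + 2) * 2 ^ 0 ≤ n + 1 := by simp; omega
  unfold stmt18M
  exact Nat.findGreatest_spec (P := fun j => (j + 2) * 2 ^ j ≤ n + 1) (m := 0) (Nat.zero_le n) h0

lemma stmt18M_le (n j : ℕ) (hj : (j + 2) * 2 ^ j ≤ n + 1) : j ≤ stmt18M n := by
  have h2 : 1 ≤ 2 ^ j := Nat.one_le_two_pow
  have hjn : j ≤ n := by nlinarith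
  exact Nat.le_findGreatest hjn hj

lemma stmt18M_tendsto : Tendsto stmt18M atTop atTop := by
  rw [tendsto_atTop]
  intro b
  filter_upwards [eventually_ge_atTop ((b + 2) * 2 ^ b)] with n hn
  exact stmt18M_le n b (by omega)

/- STATEMENT 18: Let r_0 = r_1 = 1 and r_{i+1} = 2r_i + 1 + 2^i for i ≥ 1, and let α(n)
count representations n = n_0 + Σ_{k≥1} n_k r_k with n_0 ∈ ℕ and n_k ∈ {0,1}. Then
lim_{n→∞} α(n)/n = 0, while α(n) ≥ 1 for all n ≥ 0. -/
set_option maxHeartbeats 1000000 in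
theorem stmt18 (r : ℕ → ℕ) (hr0 : r 0 = 1) (hr1 : r 1 = 1)
    (hrec : ∀ i : ℕ, 1 ≤ i → r (i + 1) = 2 * r i + 1 + 2 ^ i)
    (α : ℕ → ℕ)
    (hα : ∀ n : ℕ, α n = Nat.card {g : ℕ →₀ ℕ //
      (∀ k : ℕ, 1 ≤ k → g k ≤ 1) ∧ g 0 + ∑ k ∈ g.support.erase 0, g k * r k = n}) :
    Filter.Tendsto (fun n : ℕ => (α n : ℝ) / (n : ℝ)) Filter.atTop (nhds 0) ∧
    ∀ n : ℕ, 1 ≤ α n := by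
  -- closed form for r
  have hform : ∀ j : ℕ, r (j + 1) + 1 = (j + 2) * 2 ^ j := by
    intro j
    induction j with
    | zero => simp [hr1]
    | succ i ih =>
      rw [hrec (i + 1) (by omega)]
      have h2 : (2:ℕ) ^ (i + 1) = 2 * 2 ^ i := by ring
      nlinarith [ih, h2]
  -- the injection into subsets of Icc 1 (M n + 1)
  have key : ∀ n : ℕ, ∃ f : {g : ℕ →₀ ℕ //
      (∀ k : ℕ, 1 ≤ k → g k ≤ 1) ∧ g 0 + ∑ k ∈ g.support.erase 0, g k * r k = n} →
      ↥((Finset.Icc 1 (stmt18M n + 1)).powerset), Function.Injective f := by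
    intro n
    have hsub : ∀ (g : ℕ →₀ ℕ), (∀ k : ℕ, 1 ≤ k → g k ≤ 1) →
        g 0 + ∑ k ∈ g.support.erase 0, g k * r k = n →
        (g.support.erase 0) ⊆ Finset.Icc 1 (stmt18M n + 1) := by
      intro g hg1 hg2 k hk
      obtain ⟨hk0, hksupp⟩ := Finset.mem_erase.mp hk
      have hgk : 1 ≤ g k := Nat.one_le_iff_ne_zero.mpr (Finsupp.mem_support_iff.mp hksupp)
      have hle : g k * r k ≤ n := by
        calc g k * r k ≤ ∑ k' ∈ g.support.erase 0, g k' * r k' :=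
              Finset.single_le_sum (f := fun k' => g k' * r k') (fun _ _ => Nat.zero_le _) hk
          _ ≤ n := by omega
      have hrk : r k ≤ n := le_trans (Nat.le_mul_of_pos_left _ hgk) hle
      obtain ⟨j, rfl⟩ : ∃ j, k = j + 1 := ⟨k - 1, by omega⟩
      have hj : (j + 2) * 2 ^ j ≤ n + 1 := by rw [← hform j]; omega
      have := stmt18M_le n j hj
      simp only [Finset.mem_Icc]
      omega
    refine ⟨fun g => ⟨g.1.support.erase 0,
      Finset.mem_powerset.mpr (hsub g.1 g.2.1 g.2.2)⟩, ?_⟩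
    rintro ⟨g, hg1, hg2⟩ ⟨g', hg1', hg2'⟩ h
    simp only [Subtype.mk.injEq] at h ⊢
    have hval : ∀ (g0 : ℕ →₀ ℕ), (∀ k : ℕ, 1 ≤ k → g0 k ≤ 1) →
        ∀ k ∈ g0.support.erase 0, g0 k = 1 := by
      intro g0 hg0 k hk
      obtain ⟨hk0, hksupp⟩ := Finset.mem_erase.mp hk
      have := Finsupp.mem_support_iff.mp hksupp
      have := hg0 k (by omega)
      omega
    have hsum : ∀ (g0 : ℕ →₀ ℕ), (∀ k : ℕ, 1 ≤ k → g0 k ≤ 1) →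
        ∑ k ∈ g0.support.erase 0, g0 k * r k = ∑ k ∈ g0.support.erase 0, r k := by
      intro g0 hg0
      refine Finset.sum_congr rfl fun k hk => ?_
      rw [hval g0 hg0 k hk, one_mul]
    have h0 : g 0 = g' 0 := by
      rw [hsum g hg1] at hg2
      rw [hsum g' hg1'] at hg2'
      rw [h] at hg2
      omega
    ext k
    rcases Nat.eq_zero_or_pos k with rfl | hk
    · exact h0
    · by_cases hmem : k ∈ g.support.erase 0
      · rw [hval g hg1 k hmem, hval g' hg1' k (h ▸ hmem)]
      · have h1 : g k = 0 := by
          by_contra hne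
          exact hmem (Finset.mem_erase.mpr ⟨by omega, Finsupp.mem_support_iff.mpr hne⟩)
        have h2 : g' k = 0 := by
          by_contra hne
          exact hmem (h ▸ Finset.mem_erase.mpr ⟨by omega, Finsupp.mem_support_iff.mpr hne⟩)
        rw [h1, h2]
  -- cardinality bound
  have hcard : ∀ n : ℕ, α n ≤ 2 ^ (stmt18M n + 1) := by
    intro n
    obtain ⟨f, hf⟩ := key n
    rw [hα n]
    calc Nat.card _ ≤ Nat.card ↥((Finset.Icc 1 (stmt18M n + 1)).powerset) :=
          Nat.card_le_card_of_injective f hf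
      _ = 2 ^ (stmt18M n + 1) := by
          rw [Nat.card_eq_fintype_card, Fintype.card_coe, Finset.card_powerset,
            Nat.card_Icc]
          norm_num
  -- positivity
  have hpos : ∀ n : ℕ, 1 ≤ α n := by
    intro n
    rw [hα n]
    obtain ⟨f, hf⟩ := key n
    have : Finite {g : ℕ →₀ ℕ //
        (∀ k : ℕ, 1 ≤ k → g k ≤ 1) ∧ g 0 + ∑ k ∈ g.support.erase 0, g k * r k = n} :=
      Finite.of_injective f hf
    have hempty : (Finsupp.single 0 n : ℕ →₀ ℕ).support.erase 0 = ∅ := by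
      ext k
      simp only [Finset.mem_erase, Finsupp.mem_support_iff, Finsupp.single_apply,
        Finset.notMem_empty, iff_false]
      rintro ⟨hk, hne⟩
      simp [Ne.symm hk] at hne
    have hne : Nonempty {g : ℕ →₀ ℕ //
        (∀ k : ℕ, 1 ≤ k → g k ≤ 1) ∧ g 0 + ∑ k ∈ g.support.erase 0, g k * r k = n} := by
      refine ⟨⟨Finsupp.single 0 n, fun k hk => ?_, ?_⟩⟩
      · simp only [Finsupp.single_apply]
        rw [if_neg (by omega)]
        exact Nat.zero_le 1
      · rw [hempty]
        simp
    exact Nat.card_pos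
  refine ⟨?_, hpos⟩
  -- the limit
  have hbound : ∀ n : ℕ, 1 ≤ n → α n * (stmt18M n + 2) ≤ 4 * n := by
    intro n hn
    have h1 := hcard n
    have h2 := stmt18M_spec n hn
    calc α n * (stmt18M n + 2) ≤ 2 ^ (stmt18M n + 1) * (stmt18M n + 2) :=
          Nat.mul_le_mul_right _ h1
      _ = 2 * ((stmt18M n + 2) * 2 ^ stmt18M n) := by ring
      _ ≤ 2 * (n + 1) := by omega
      _ ≤ 4 * n := by omega
  have hM2 : Tendsto (fun n : ℕ => stmt18M n + 2) atTop atTop :=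
    tendsto_atTop_mono (fun n => Nat.le_add_right _ 2) stmt18M_tendsto
  have hMtend : Tendsto (fun n : ℕ => ((stmt18M n + 2 : ℕ) : ℝ)) atTop atTop :=
    tendsto_natCast_atTop_atTop.comp hM2
  have hgtend : Tendsto (fun n : ℕ => (4 : ℝ) / ((stmt18M n + 2 : ℕ) : ℝ)) atTop (nhds 0) :=
    Tendsto.div_atTop tendsto_const_nhds hMtend
  apply squeeze_zero' (g := fun n : ℕ => (4 : ℝ) / ((stmt18M n + 2 : ℕ) : ℝ))
  · filter_upwards with n
    positivity
  · filter_upwards [eventually_ge_atTop 1] with n hn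
    have hb := hbound n hn
    rw [div_le_div_iff₀ (by exact_mod_cast hn) (by positivity)]
    calc (α n : ℝ) * ((stmt18M n + 2 : ℕ) : ℝ) = ((α n * (stmt18M n + 2) : ℕ) : ℝ) := by
          push_cast; ring
      _ ≤ ((4 * n : ℕ) : ℝ) := by exact_mod_cast hb
      _ = 4 * (n : ℝ) := by push_cast; ring
  · exact hgtend
end

section
/- Let {r_i} be the sequence r_0 = r_1 = 1, r_{i+1} = 2r_i + 1 + e_{i+1} arising from the greedy binary digits of some θ ∈ ℝ_{≥0} ∪ {∞} (with e_j = 2^{j−1} when θ = ∞), and let α(n) be the associated representation count. Then there is no quasi-polynomial Q (a function of the form Σ_{l=0}^d a_l(n) n^l with each a_l periodic) and bounded function b such that α(n) = Q(n) + b(n) for all sufficiently large n. Concretely: for any s ≥ 1, any M ≥ 0, and any functions Q, b with Q quasi-polynomial of period s and |b(n)| ≤ M for all n, there exists n with α(n) ≠ Q(n) + b(n). -/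
open Finset Polynomial Filter

/-- Counting lemma: if all `r k` with `k ≥ i+1` exceed `n` and the sum of `r 1,…,r i`
is at most `n`, there are exactly `2^i` representations. -/
lemma aux_card (r : ℕ → ℕ) (i n : ℕ)
    (hsum : ∑ k ∈ Finset.Icc 1 i, r k ≤ n)
    (hbig : ∀ k, i + 1 ≤ k → n < r k) :
    Nat.card {g : ℕ →₀ ℕ //
      (∀ k : ℕ, 1 ≤ k → g k ≤ 1) ∧ g 0 + ∑ k ∈ g.support.erase 0, g k * r k = n} = 2 ^ i := by
  have key : ∀ T : Finset ℕ, T ⊆ Finset.Icc 1 i → ∑ k ∈ T, r k ≤ n := fun T hT =>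
    le_trans (Finset.sum_le_sum_of_subset hT) hsum
  set F : Finset ℕ → (ℕ →₀ ℕ) := fun T =>
    Finsupp.single 0 (n - ∑ k ∈ T, r k) + ∑ k ∈ T, Finsupp.single k 1 with hF
  have hFapp : ∀ T : Finset ℕ, T ⊆ Finset.Icc 1 i → ∀ k,
      (F T) k = if k = 0 then n - ∑ j ∈ T, r j else (if k ∈ T then 1 else 0) := by
    intro T hT k
    have h0 : 0 ∉ T := fun h => by simpa using (Finset.mem_Icc.mp (hT h)).1
    simp only [hF, Finsupp.add_apply, Finsupp.finset_sum_apply, Finsupp.single_apply]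
    rcases eq_or_ne k 0 with rfl | hk
    · simp [Finset.sum_ite_eq' T (0:ℕ) (fun _ => (1:ℕ)), h0]
    · simp [hk, Ne.symm hk, Finset.sum_ite_eq' T k (fun _ => (1:ℕ))]
  have hFsupp : ∀ T : Finset ℕ, T ⊆ Finset.Icc 1 i → (F T).support.erase 0 = T := by
    intro T hT
    ext k
    rcases eq_or_ne k 0 with rfl | hk
    · simp only [Finset.mem_erase, ne_eq, not_true_eq_false, false_and, false_iff]
      intro h0; exact by simpa using (Finset.mem_Icc.mp (hT h0)).1
    · simp only [Finset.mem_erase, hk, ne_eq, not_false_eq_true, true_and,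
        Finsupp.mem_support_iff, hFapp T hT k, if_neg hk]
      by_cases hkT : k ∈ T <;> simp [hkT]
  -- the equivalence
  have e : {g : ℕ →₀ ℕ //
      (∀ k : ℕ, 1 ≤ k → g k ≤ 1) ∧ g 0 + ∑ k ∈ g.support.erase 0, g k * r k = n} ≃
      {T : Finset ℕ // T ⊆ Finset.Icc 1 i} := by
    have hsub : ∀ g : {g : ℕ →₀ ℕ //
        (∀ k : ℕ, 1 ≤ k → g k ≤ 1) ∧ g 0 + ∑ k ∈ g.support.erase 0, g k * r k = n},
        (g.1.support.erase 0) ⊆ Finset.Icc 1 i := by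
      rintro ⟨g, hg1, hg2⟩ k hk
      obtain ⟨hk0, hksup⟩ := Finset.mem_erase.mp hk
      have hgk : g k ≠ 0 := Finsupp.mem_support_iff.mp hksup
      refine Finset.mem_Icc.mpr ⟨by omega, ?_⟩
      by_contra hik
      have hik' : i + 1 ≤ k := by omega
      have h1 : r k ≤ g k * r k := Nat.le_mul_of_pos_left _ (Nat.pos_of_ne_zero hgk)
      have h2 : g k * r k ≤ ∑ j ∈ g.support.erase 0, g j * r j :=
        Finset.single_le_sum (f := fun j => g j * r j) (fun j _ => Nat.zero_le _) hk
      have := hbig k hik'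
      omega
    refine
      { toFun := fun g => ⟨g.1.support.erase 0, hsub g⟩
        invFun := fun T => ⟨F T.1, ?_, ?_⟩
        left_inv := ?_
        right_inv := ?_ }
    · intro k hk
      rw [hFapp T.1 T.2 k, if_neg (by omega)]
      split <;> omega
    · rw [hFsupp T.1 T.2, hFapp T.1 T.2 0, if_pos rfl]
      have hsum' : ∑ k ∈ T.1, (F T.1) k * r k = ∑ k ∈ T.1, r k := by
        refine Finset.sum_congr rfl fun k hk => ?_
        have h0 : k ≠ 0 := by
          have := (Finset.mem_Icc.mp (T.2 hk)).1; omega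
        rw [hFapp T.1 T.2 k, if_neg h0, if_pos hk, one_mul]
      rw [hsum']
      exact Nat.sub_add_cancel (key T.1 T.2)
    · rintro ⟨g, hg1, hg2⟩
      apply Subtype.ext
      dsimp only
      have hT : (g.support.erase 0) ⊆ Finset.Icc 1 i := hsub ⟨g, hg1, hg2⟩
      have hone : ∀ k ∈ g.support.erase 0, g k = 1 := by
        intro k hk
        obtain ⟨hk0, hksup⟩ := Finset.mem_erase.mp hk
        have := hg1 k (by omega)
        have := Finsupp.mem_support_iff.mp hksup
        omega
      have hsum' : ∑ k ∈ g.support.erase 0, g k * r k = ∑ k ∈ g.support.erase 0, r k :=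
        Finset.sum_congr rfl fun k hk => by rw [hone k hk, one_mul]
      rw [hsum'] at hg2
      ext k
      rw [hFapp _ hT k]
      rcases eq_or_ne k 0 with rfl | hk
      · rw [if_pos rfl]
        omega
      · rw [if_neg hk]
        by_cases hkT : k ∈ g.support.erase 0
        · rw [if_pos hkT, hone k hkT]
        · rw [if_neg hkT]
          have hzero : g k = 0 := by
            by_contra hne
            exact hkT (Finset.mem_erase.mpr ⟨hk, Finsupp.mem_support_iff.mpr hne⟩)
          exact hzero.symm
    · rintro ⟨T, hT⟩
      exact Subtype.ext (hFsupp T hT)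
  rw [Nat.card_congr e, Nat.card_congr
    (Equiv.subtypeEquivRight (p := fun T : Finset ℕ => T ⊆ Finset.Icc 1 i)
      (q := fun T : Finset ℕ => T ∈ (Finset.Icc 1 i).powerset)
      (fun T => Iff.symm Finset.mem_powerset)),
    Nat.card_eq_fintype_card, Fintype.card_coe, Finset.card_powerset, Nat.card_Icc]
  simp

lemma poly_deg_le_zero (q : Polynomial ℝ) (B : ℝ)
    (h : ∀ x0 : ℝ, ∃ x : ℝ, x0 ≤ x ∧ |q.eval x| ≤ B) : q.degree ≤ 0 := by
  by_contra hd
  push_neg at hd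
  have ht : Tendsto (fun x => |q.eval x|) atTop atTop := Polynomial.abs_tendsto_atTop q hd
  obtain ⟨x0, hx0⟩ := (ht.eventually_gt_atTop B).exists_forall_of_atTop
  obtain ⟨x, hx1, hx2⟩ := h x0
  exact absurd (hx0 x hx1) (not_lt.mpr hx2)

/- STATEMENT 19: Let {r_i} be the sequence r_0 = r_1 = 1, r_{i+1} = 2r_i + 1 + e_{i+1}
arising from the greedy binary digits of some θ ∈ ℝ_{≥0} ∪ {∞} (with e_j = 2^{j−1} when
θ = ∞), and let α(n) be the associated representation count. Then α is not eventually a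
quasi-polynomial plus a bounded function: for any period s ≥ 1, bound M, quasi-polynomial
Q(n) = Σ_{l=0}^d a_l(n) n^l with each a_l periodic of period s, and any b with |b(n)| ≤ M,
there exist arbitrarily large n with α(n) ≠ Q(n) + b(n). -/
theorem stmt19 (e : ℕ → ℕ)
    -- e is either the greedy binary digit sequence of some θ ≥ 0, or (the θ = ∞ case)
    -- e j = 2^{j-1} for j ≥ 2
    (he : (∃ θ : ℝ, 0 ≤ θ ∧ e 2 = ⌊2 * θ⌋₊ ∧ (∀ j : ℕ, 3 ≤ j → e j ≤ 1) ∧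
        (∀ j : ℕ, 2 ≤ j →
          0 ≤ θ - ∑ k ∈ Finset.Icc 2 j, (e k : ℝ) * 2 ^ ((1 : ℤ) - (k : ℤ)) ∧
          θ - ∑ k ∈ Finset.Icc 2 j, (e k : ℝ) * 2 ^ ((1 : ℤ) - (k : ℤ)) <
            2 ^ ((1 : ℤ) - (j : ℤ)))) ∨
      (∀ j : ℕ, 2 ≤ j → e j = 2 ^ (j - 1)))
    (r : ℕ → ℕ) (hr0 : r 0 = 1) (hr1 : r 1 = 1)
    (hrec : ∀ i : ℕ, 1 ≤ i → r (i + 1) = 2 * r i + 1 + e (i + 1))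
    -- α n counts the representations n = n_0 + Σ_{k≥1} n_k r_k with n_0 ∈ ℕ and
    -- n_k ∈ {0,1} for k ≥ 1 (finitely many nonzero)
    (α : ℕ → ℕ)
    (hα : ∀ n : ℕ, α n = Nat.card {g : ℕ →₀ ℕ //
      (∀ k : ℕ, 1 ≤ k → g k ≤ 1) ∧ g 0 + ∑ k ∈ g.support.erase 0, g k * r k = n})
    -- a quasi-polynomial Q of degree d with coefficients of period s, and b bounded by M
    (s : ℕ) (hs : 1 ≤ s) (M : ℝ) (d : ℕ) (a : ℕ → ℕ → ℝ)
    (hper : ∀ l n : ℕ, a l (n + s) = a l n)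
    (Q : ℕ → ℝ) (hQ : ∀ n : ℕ, Q n = ∑ l ∈ Finset.range (d + 1), a l n * (n : ℝ) ^ l)
    (b : ℕ → ℝ) (hb : ∀ n : ℕ, |b n| ≤ M) :
    ∀ N : ℕ, ∃ n : ℕ, N ≤ n ∧ (α n : ℝ) ≠ Q n + b n := by
  by_contra hcon
  push_neg at hcon
  obtain ⟨N, hN⟩ := hcon
  clear he
  have hM : 0 ≤ M := le_trans (abs_nonneg _) (hb 0)
  have hrpos : ∀ k, 1 ≤ r k := by
    intro k
    match k with
    | 0 => omega
    | 1 => omega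
    | (k+2) => rw [hrec (k+1) (by omega)]; omega
  have hrmono : ∀ j k, 1 ≤ j → j ≤ k → r j ≤ r k := by
    intro j k hj hjk
    induction k with
    | zero => omega
    | succ k ih =>
      rcases Nat.lt_or_ge j (k+1) with h | h
      · have h1 := ih (by omega)
        have h2 := hrec k (by omega)
        have h3 := hrpos k
        omega
      · have : j = k + 1 := by omega
        subst this
        exact le_refl _
  set R : ℕ → ℕ := fun i => ∑ k ∈ Finset.range (i+1), r k with hR
  have hRsucc : ∀ i, R (i+1) = R i + r (i+1) := fun i => Finset.sum_range_succ r (i+1)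
  have hR0 : R 0 = 1 := by simp [hR, hr0]
  have hlen : ∀ i, R i + i ≤ r (i+1) := by
    intro i
    induction i with
    | zero => simp [hR0, hr1]
    | succ i ih =>
      have h1 := hRsucc i
      have h2 := hrec (i+1) (by omega)
      have h3 := hrpos (i+1)
      omega
  have hRge : ∀ i, i + 1 ≤ R i := by
    intro i
    calc i + 1 = ∑ _k ∈ Finset.range (i+1), 1 := by simp
    _ ≤ R i := Finset.sum_le_sum (fun k _ => hrpos k)
  have hIccR : ∀ i, ∑ k ∈ Finset.Icc 1 i, r k ≤ R i := by
    intro i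
    apply Finset.sum_le_sum_of_subset
    intro k hk
    simp only [Finset.mem_Icc] at hk
    exact Finset.mem_range.mpr (by omega)
  have hαval : ∀ i n, R i ≤ n → n < r (i+1) → α n = 2^i := by
    intro i n h1 h2
    rw [hα n]
    exact aux_card r i n (le_trans (hIccR i) h1)
      (fun k hk => lt_of_lt_of_le h2 (hrmono (i+1) k (by omega) hk))
  have hap : ∀ l k, a l (s * k) = a l 0 := by
    intro l k
    induction k with
    | zero => simp
    | succ k ih => rw [Nat.mul_succ, hper, ih]
  set P : Polynomial ℝ := ∑ l ∈ Finset.range (d+1),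
    Polynomial.C (a l 0) * (Polynomial.C (s:ℝ) * Polynomial.X)^l with hP
  have hPeval : ∀ k : ℕ, P.eval (k:ℝ) = Q (s * k) := by
    intro k
    rw [hQ, hP, Polynomial.eval_finset_sum]
    refine Finset.sum_congr rfl fun l _ => ?_
    rw [hap l k]
    push_cast
    simp [mul_pow]
  set K : ℕ → ℕ := fun i => R i / s + 1 with hK
  have hKeq : ∀ i, s * K i = s * (R i / s) + s := by
    intro i
    simp only [hK]
    ring
  have hK1 : ∀ i, R i < s * K i := by
    intro i
    have hdm := Nat.div_add_mod (R i) s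
    have hm := Nat.mod_lt (R i) (show 0 < s by omega)
    have h2 := hKeq i
    omega
  have hKub : ∀ i, s * K i ≤ R i + s := by
    intro i
    have hdm := Nat.div_add_mod (R i) s
    have h2 := hKeq i
    omega
  have hK2 : ∀ i m, s * (m+1) + 1 ≤ i → s * (K i + m) < r (i+1) := by
    intro i m him
    have h2 : s * (K i + m) = s * K i + s * m := by ring
    have h4 : s * (m+1) = s + s * m := by ring
    have h5 := hKub i
    have hlen' := hlen i
    omega
  have hK3 : ∀ i m, s * K i ≤ s * (K i + m) := by
    intro i m
    exact Nat.mul_le_mul_left s (by omega)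
  have hKα : ∀ i m, s * (m+1) + 1 ≤ i → α (s * (K i + m)) = 2 ^ i := by
    intro i m him
    refine hαval i _ ?_ (hK2 i m him)
    have h1 := hK1 i
    have h2 := hK3 i m
    omega
  have hKN : ∀ i m, N ≤ i → N ≤ s * (K i + m) := by
    intro i m hi
    have h1 := hK1 i
    have h2 := hRge i
    have h3 := hK3 i m
    omega
  have hPQval : ∀ i m, s * (m+1) + 1 ≤ i → N ≤ i →
      P.eval ((K i + m : ℕ) : ℝ) = (2:ℝ)^i - b (s * (K i + m)) := by
    intro i m h1 h2
    have hcard := hKα i m h1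
    have heq := hN (s * (K i + m)) (hKN i m h2)
    rw [hcard] at heq
    rw [hPeval (K i + m)]
    push_cast at heq
    linarith
  set q : Polynomial ℝ := P.comp (Polynomial.X + Polynomial.C 1) - P with hq
  have hqeval : ∀ x : ℝ, q.eval x = P.eval (x+1) - P.eval x := by
    intro x
    simp [hq, Polynomial.eval_comp]
  have hqdeg : q.degree ≤ 0 := by
    apply poly_deg_le_zero q (2*M)
    intro x0
    obtain ⟨x1, hx1⟩ := exists_nat_ge x0
    set i := max (s * x1) (max N (2*s+1)) with hi
    have hNi : N ≤ i := le_trans (le_max_left _ _) (le_max_right _ _)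
    have h2s : 2*s + 1 ≤ i := le_trans (le_max_right _ _) (le_max_right _ _)
    have hsx : s * x1 ≤ i := le_max_left _ _
    refine ⟨(K i : ℝ), ?_, ?_⟩
    · have hKi : x1 ≤ K i := by
        have h1 : s * x1 ≤ R i := le_trans hsx (by have := hRge i; omega)
        have hcomm : x1 * s = s * x1 := Nat.mul_comm _ _
        have h2 : x1 ≤ R i / s := (Nat.le_div_iff_mul_le (by omega : 0 < s)).mpr
          (by omega)
        simp only [hK]
        omega
      calc x0 ≤ (x1:ℝ) := hx1
      _ ≤ (K i : ℝ) := by exact_mod_cast hKi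
    · have h1 : s * (0+1) + 1 ≤ i := by omega
      have h2 : s * (1+1) + 1 ≤ i := by omega
      have e0 := hPQval i 0 h1 hNi
      have e1 := hPQval i 1 h2 hNi
      rw [hqeval]
      have hcast : ((K i : ℕ):ℝ) + 1 = ((K i + 1 : ℕ):ℝ) := by push_cast; ring
      rw [hcast, e1]
      simp only [Nat.add_zero] at e0
      rw [e0]
      have hbb0 := abs_le.mp (hb (s * K i))
      have hbb1 := abs_le.mp (hb (s * (K i + 1)))
      rw [abs_le]
      constructor <;> [linarith; linarith]
  have hqC : q = Polynomial.C (q.coeff 0) := Polynomial.eq_C_of_degree_le_zero hqdeg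
  set c1 := q.coeff 0 with hc1def
  have hstep : ∀ x : ℝ, P.eval (x+1) = P.eval x + c1 := by
    intro x
    have h := hqeval x
    rw [hqC] at h
    simp only [Polynomial.eval_C] at h
    linarith
  have htel : ∀ (k m : ℕ), P.eval ((k + m : ℕ):ℝ) = P.eval (k:ℝ) + m * c1 := by
    intro k m
    induction m with
    | zero => simp
    | succ m ih =>
      have hcast : ((k + (m+1) : ℕ):ℝ) = ((k + m : ℕ):ℝ) + 1 := by push_cast; ring
      rw [hcast, hstep, ih]
      push_cast
      ring
  have hc10 : c1 = 0 := by
    by_contra hc1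
    obtain ⟨m, hm⟩ := exists_nat_gt (2*M / |c1|)
    have hc1' : 0 < |c1| := abs_pos.mpr hc1
    have hm2 : 2*M < m * |c1| := by
      rw [div_lt_iff₀ hc1'] at hm
      linarith
    set i := max N (s*(m+1)+1) with hi
    have hNi : N ≤ i := le_max_left _ _
    have h2 : s*(m+1)+1 ≤ i := le_max_right _ _
    have h1 : s*(0+1)+1 ≤ i := by nlinarith [Nat.le_max_right N (s*(m+1)+1), Nat.mul_le_mul_left s (show 0+1 ≤ m+1 by omega)]
    have e0 := hPQval i 0 h1 hNi
    have em := hPQval i m h2 hNi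
    have ht := htel (K i) m
    simp only [Nat.add_zero] at e0
    rw [ht, e0] at em
    have hbb0 := abs_le.mp (hb (s * K i))
    have hbbm := abs_le.mp (hb (s * (K i + m)))
    have habs : |(m:ℝ) * c1| ≤ 2*M := by
      rw [abs_le]
      constructor <;> [linarith; linarith]
    rw [abs_mul, Nat.abs_cast] at habs
    linarith
  have hconstP : ∀ k : ℕ, P.eval (k:ℝ) = P.eval ((0:ℕ):ℝ) := by
    intro k
    have := htel 0 k
    rw [hc10] at this
    simpa using this
  obtain ⟨n0, hn0⟩ := exists_nat_gt (P.eval ((0:ℕ):ℝ) + M)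
  set i := max n0 (max N (s+1)) with hi
  have hNi : N ≤ i := le_trans (le_max_left _ _) (le_max_right _ _)
  have hsi : s + 1 ≤ i := le_trans (le_max_right _ _) (le_max_right _ _)
  have h1 : s*(0+1)+1 ≤ i := by omega
  have e0 := hPQval i 0 h1 hNi
  simp only [Nat.add_zero] at e0
  rw [hconstP (K i)] at e0
  have h2i : (n0:ℝ) < (2:ℝ)^i := by
    have ha : n0 ≤ i := le_max_left _ _
    have hbq : i < 2^i := Nat.lt_two_pow_self
    have : n0 < 2^i := lt_of_le_of_lt ha hbq
    exact_mod_cast this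
  have hbb := abs_le.mp (hb (s * K i))
  linarith
end
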